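/- arXiv:0809.3367 — 13 statements merged into one kernel-verified Lean document; each statement's English description precedes it below -/
import Mathlib

section
/- Assume the Bethe equations hold. Then for every x ∈ ℂ \ {s_1,…,s_m}: ω(x)² − V′(x)ω(x) + ħω′(x) = −ħ ∑_{i=1}^m (V′(x) − V′(s_i))/(x − s_i), where ω′(x) = −ħ∑_{i=1}^m 1/(x−s_i)² is the derivative of ω. -/
open Finset Polynomial

private lemma erase_sum_ite {m : ℕ} (g : Fin m → Fin m → ℂ) (i : Fin m) :
    ∑ j ∈ univ.erase i, g i j = ∑ j, if j ≠ i then g i j else 0 := by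
  rw [← Finset.filter_ne', Finset.sum_filter]

private lemma swap_erase_sum {m : ℕ} (g : Fin m → Fin m → ℂ) :
    ∑ i, ∑ j ∈ univ.erase i, g i j = ∑ i, ∑ j ∈ univ.erase i, g j i := by
  calc ∑ i, ∑ j ∈ univ.erase i, g i j
      = ∑ i, ∑ j, if j ≠ i then g i j else 0 :=
        Finset.sum_congr rfl fun i _ => erase_sum_ite g i
    _ = ∑ j, ∑ i, if j ≠ i then g i j else 0 := Finset.sum_comm
    _ = ∑ i, ∑ j, if j ≠ i then g j i else 0 := by
        refine Finset.sum_congr rfl fun i _ => Finset.sum_congr rfl fun j _ => ?_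
        exact if_congr ne_comm rfl rfl
    _ = ∑ i, ∑ j ∈ univ.erase i, g j i :=
        (Finset.sum_congr rfl fun i _ => erase_sum_ite (fun a b => g b a) i).symm

/-- If the Bethe equations hold, then for `x` outside `{s 1, …, s m}`,
`ω(x)² − V′(x) ω(x) + ħ ω′(x) = − ħ ∑ i, (V′(x) − V′(s i)) / (x − s i)`,
where `ω(x) = ħ ∑ i, 1/(x − s i)` and `ω′(x) = − ħ ∑ i, 1/(x − s i)²`. -/
theorem omega_potential_identity (m : ℕ) (hbar : ℂ) (hhbar : hbar ≠ 0) (V : Polynomial ℂ)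
    (s : Fin m → ℂ) (hs : Function.Injective s)
    (hBethe : ∀ i, V.derivative.eval (s i)
      = 2 * hbar * ∑ j ∈ univ.erase i, 1 / (s i - s j))
    (x : ℂ) (hx : ∀ i, x ≠ s i) :
    (hbar * ∑ i, 1 / (x - s i)) ^ 2
        - V.derivative.eval x * (hbar * ∑ i, 1 / (x - s i))
        + hbar * (-hbar * ∑ i, 1 / (x - s i) ^ 2)
      = -hbar * ∑ i, (V.derivative.eval x - V.derivative.eval (s i)) / (x - s i) := by
  have hxs : ∀ i, x - s i ≠ 0 := fun i => sub_ne_zero.mpr (hx i)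
  set f : Fin m → ℂ := fun i => 1 / (x - s i) with hf
  set A := V.derivative.eval x with hA
  have hsq : ∀ i : Fin m, 1 / (x - s i) ^ 2 = f i ^ 2 := by
    intro i; rw [hf]; simp [div_pow]
  simp only [hsq]
  -- off-diagonal expansion of the square
  have h1 : (∑ i, f i) ^ 2 - ∑ i, f i ^ 2
      = ∑ i, ∑ j ∈ univ.erase i, f i * f j := by
    rw [sq, Finset.sum_mul_sum]
    rw [← Finset.sum_sub_distrib]
    refine Finset.sum_congr rfl fun i _ => ?_
    rw [← Finset.add_sum_erase univ (fun j => f i * f j) (mem_univ i), sq]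
    ring
  -- partial fractions on each off-diagonal term
  have h2 : ∑ i, ∑ j ∈ univ.erase i, f i * f j
      = ∑ i, ∑ j ∈ univ.erase i, (f i * (s i - s j)⁻¹ - f j * (s i - s j)⁻¹) := by
    refine Finset.sum_congr rfl fun i _ => Finset.sum_congr rfl fun j hj => ?_
    have hij : s i ≠ s j := fun h => (Finset.mem_erase.mp hj).1 (hs h.symm)
    have hsij : s i - s j ≠ 0 := sub_ne_zero.mpr hij
    have hdiff : f i - f j = (s i - s j) * (f i * f j) := by
      simp only [hf]
      rw [div_sub_div _ _ (hxs i) (hxs j), one_mul, mul_one, div_mul_div_comm,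
        one_mul, mul_one_div]
      congr 1
      ring
    have : (f i - f j) * (s i - s j)⁻¹ = f i * f j := by
      rw [hdiff, mul_comm (s i - s j), mul_assoc, mul_inv_cancel₀ hsij, mul_one]
    rw [← this]; ring
  -- symmetrization
  have h3 : ∑ i, ∑ j ∈ univ.erase i, f j * (s i - s j)⁻¹
      = - ∑ i, ∑ j ∈ univ.erase i, f i * (s i - s j)⁻¹ := by
    rw [swap_erase_sum (fun i j => f j * (s i - s j)⁻¹)]
    rw [← Finset.sum_neg_distrib]
    refine Finset.sum_congr rfl fun i _ => ?_
    rw [← Finset.sum_neg_distrib]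
    refine Finset.sum_congr rfl fun j hj => ?_
    rw [show s j - s i = -(s i - s j) by ring, inv_neg]
    ring
  have key : (∑ i, f i) ^ 2 - ∑ i, f i ^ 2
      = ∑ i, f i * (2 * ∑ j ∈ univ.erase i, 1 / (s i - s j)) := by
    rw [h1, h2]
    simp only [Finset.sum_sub_distrib]
    rw [h3, sub_neg_eq_add, ← Finset.sum_add_distrib]
    refine Finset.sum_congr rfl fun i _ => ?_
    simp only [one_div]
    have hS : ∑ j ∈ univ.erase i, f i * (s i - s j)⁻¹
        = f i * ∑ j ∈ univ.erase i, (s i - s j)⁻¹ := (Finset.mul_sum _ _ _).symm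
    rw [hS]; ring
  -- now assemble
  have hB : ∀ i, hbar * (f i * (2 * ∑ j ∈ univ.erase i, 1 / (s i - s j)))
      = V.derivative.eval (s i) * f i := by
    intro i; rw [hBethe i]; ring
  calc (hbar * ∑ i, f i) ^ 2 - A * (hbar * ∑ i, f i) + hbar * (-hbar * ∑ i, f i ^ 2)
      = hbar * (hbar * ((∑ i, f i) ^ 2 - ∑ i, f i ^ 2)) - A * (hbar * ∑ i, f i) := by ring
    _ = hbar * (∑ i, hbar * (f i * (2 * ∑ j ∈ univ.erase i, 1 / (s i - s j))))
          - A * (hbar * ∑ i, f i) := by rw [key, Finset.mul_sum]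
    _ = hbar * (∑ i, V.derivative.eval (s i) * f i) - A * (hbar * ∑ i, f i) := by
          rw [Finset.sum_congr rfl fun i _ => hB i]
    _ = -hbar * ∑ i, (A - V.derivative.eval (s i)) * f i := by
          simp only [Finset.mul_sum, ← Finset.sum_sub_distrib, ← Finset.sum_neg_distrib]
          refine Finset.sum_congr rfl fun i _ => ?_
          ring
    _ = -hbar * ∑ i, (A - V.derivative.eval (s i)) / (x - s i) := by
          refine congrArg _ (Finset.sum_congr rfl fun i _ => ?_)
          rw [hf, div_eq_mul_one_div]
end

section
/- Assume the Bethe equations hold. Define the entire function ψ(x) = (∏_{i=1}^m (x − s_i)) · exp(−V(x)/(2ħ)), and let U = (V′)² − 2ħV″ − 4ħ ∑_{i=1}^m Q_i ∈ ℂ[X], where for each i, Q_i ∈ ℂ[X] is the unique polynomial with V′ − V′(s_i) = (X − s_i)·Q_i. Then ψ satisfies the Schrödinger equation 4ħ² ψ″(x) = U(x) ψ(x) for every x ∈ ℂ, where ψ″ denotes the second complex derivative of ψ. -/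
open Finset Polynomial


lemma deriv_fin_prod {ι : Type*} [DecidableEq ι] (t : Finset ι) (f : ι → Polynomial ℂ) :
    derivative (∏ i ∈ t, f i) = ∑ i ∈ t, (∏ j ∈ t.erase i, f j) * derivative (f i) := by
  induction t using Finset.induction_on with
  | empty => simp
  | @insert a t ha ih =>
    rw [Finset.prod_insert ha, derivative_mul, ih, Finset.sum_insert ha,
      Finset.erase_insert ha, Finset.mul_sum, mul_comm (derivative (f a))]
    congr 1
    refine Finset.sum_congr rfl fun i hi => ?_
    rw [Finset.erase_insert_of_ne (fun h => ha (by rw [h]; exact hi)),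
      Finset.prod_insert (fun h => ha (Finset.mem_of_mem_erase h)), mul_assoc]

example (m : ℕ) (s : Fin m → ℂ) :
    derivative (∏ i, (X - C (s i)) : Polynomial ℂ)
      = ∑ i, ∏ j ∈ univ.erase i, (X - C (s j)) := by
  rw [deriv_fin_prod]; simp

example (m : ℕ) (f : Fin m → Fin m → ℂ) :
    ∑ i, ∑ j ∈ univ.erase i, f i j = ∑ i, ∑ j ∈ univ.erase i, f j i := by
  rw [Finset.sum_comm' (s := univ) (t := fun i => univ.erase i) (t' := univ)
    (s' := fun j => univ.erase j) (by intro x y; simp [Finset.mem_erase, ne_comm])]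

lemma key_sum (m : ℕ) (hbar : ℂ) (V : Polynomial ℂ) (s : Fin m → ℂ) (hs : Function.Injective s)
    (hBethe : ∀ i, V.derivative.eval (s i)
      = 2 * hbar * ∑ j ∈ univ.erase i, 1 / (s i - s j)) (x : ℂ) :
    ∑ i, V.derivative.eval (s i) * ∏ j ∈ univ.erase i, (x - s j)
      = hbar * (derivative (derivative (∏ i, (X - C (s i)) : Polynomial ℂ))).eval x := by
  have h1 : derivative (∏ i, (X - C (s i)) : Polynomial ℂ)
      = ∑ i, ∏ j ∈ univ.erase i, (X - C (s j)) := by rw [deriv_fin_prod]; simp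
  have h2 : derivative (derivative (∏ i, (X - C (s i)) : Polynomial ℂ))
      = ∑ i, ∑ j ∈ univ.erase i, ∏ k ∈ (univ.erase i).erase j, (X - C (s k)) := by
    rw [h1, derivative_sum]
    refine Finset.sum_congr rfl fun i _ => ?_
    rw [deriv_fin_prod]; simp
  have hpp : (derivative (derivative (∏ i, (X - C (s i)) : Polynomial ℂ))).eval x
      = ∑ i, ∑ j ∈ univ.erase i, ∏ k ∈ (univ.erase i).erase j, (x - s k) := by
    rw [h2]; simp [eval_finset_sum, eval_prod]
  set g : Fin m → Fin m → ℂ :=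
    fun i j => (∏ k ∈ univ.erase i, (x - s k)) / (s i - s j) with hg
  have hswap : ∑ i, ∑ j ∈ univ.erase i, g i j = ∑ i, ∑ j ∈ univ.erase i, g j i := by
    rw [Finset.sum_comm' (s := univ) (t := fun i => univ.erase i) (t' := univ)
      (s' := fun j => univ.erase j) (by intro a b; simp [Finset.mem_erase, ne_comm])]
  have hterm : ∀ i, ∀ j ∈ univ.erase i, g i j + g j i
      = ∏ k ∈ (univ.erase i).erase j, (x - s k) := by
    intro i j hj
    have hji : j ≠ i := (Finset.mem_erase.mp hj).1
    have hij : i ∈ univ.erase j := Finset.mem_erase.mpr ⟨hji.symm, Finset.mem_univ i⟩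
    have d1 : s i - s j ≠ 0 := sub_ne_zero.mpr fun h => hji.symm (hs h)
    have d2 : s j - s i ≠ 0 := sub_ne_zero.mpr fun h => hji (hs h)
    have e1 : ∏ k ∈ univ.erase i, (x - s k)
        = (x - s j) * ∏ k ∈ (univ.erase i).erase j, (x - s k) :=
      (Finset.mul_prod_erase _ _ hj).symm
    have e2 : ∏ k ∈ univ.erase j, (x - s k)
        = (x - s i) * ∏ k ∈ (univ.erase i).erase j, (x - s k) := by
      rw [Finset.erase_right_comm]
      exact (Finset.mul_prod_erase _ _ hij).symm
    rw [hg]; dsimp only; rw [e1, e2]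
    field_simp
    ring
  calc ∑ i, V.derivative.eval (s i) * ∏ j ∈ univ.erase i, (x - s j)
      = hbar * ∑ i, ∑ j ∈ univ.erase i, (g i j + g i j) := by
        rw [Finset.mul_sum]
        refine Finset.sum_congr rfl fun i _ => ?_
        rw [hBethe i, Finset.mul_sum, Finset.sum_mul, Finset.mul_sum]
        refine Finset.sum_congr rfl fun j _ => ?_
        rw [hg]; dsimp only; ring
    _ = hbar * (∑ i, ∑ j ∈ univ.erase i, g i j + ∑ i, ∑ j ∈ univ.erase i, g j i) := by
        rw [← hswap]; simp [Finset.sum_add_distrib]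
    _ = hbar * ∑ i, ∑ j ∈ univ.erase i, (g i j + g j i) := by
        simp [Finset.sum_add_distrib]
    _ = hbar * (derivative (derivative (∏ i, (X - C (s i)) : Polynomial ℂ))).eval x := by
        rw [hpp]
        congr 1
        exact Finset.sum_congr rfl fun i _ => Finset.sum_congr rfl fun j hj => hterm i j hj

/-- Assume the Bethe equations. With
`ψ(x) = (∏ i, (x − s i)) · exp(−V(x)/(2ħ))` and
`U = (V′)² − 2ħ V″ − 4ħ ∑ i, Q i`, where `Q i` is the (unique) polynomial with
`V′ − V′(s i) = (X − s i)·Q i`, the Schrödinger equation `4ħ² ψ″(x) = U(x) ψ(x)`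
holds for every `x ∈ ℂ`. -/
theorem schroedinger_equation (m : ℕ) (hbar : ℂ) (hhbar : hbar ≠ 0) (V : Polynomial ℂ)
    (s : Fin m → ℂ) (hs : Function.Injective s)
    (hBethe : ∀ i, V.derivative.eval (s i)
      = 2 * hbar * ∑ j ∈ univ.erase i, 1 / (s i - s j))
    (Q : Fin m → Polynomial ℂ)
    (hQ : ∀ i, V.derivative - C (V.derivative.eval (s i)) = (X - C (s i)) * Q i) :
    ∀ x : ℂ,
      4 * hbar ^ 2 *
          deriv (deriv (fun y : ℂ =>
            (∏ i, (y - s i)) * Complex.exp (-(V.eval y) / (2 * hbar)))) x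
        = (V.derivative ^ 2 - C (2 * hbar) * derivative V.derivative
              - C (4 * hbar) * ∑ i, Q i).eval x
            * ((∏ i, (x - s i)) * Complex.exp (-(V.eval x) / (2 * hbar))) := by
  intro x
  have h2h : (2 : ℂ) * hbar ≠ 0 := by simp [hhbar]
  set p : Polynomial ℂ := ∏ i, (X - C (s i)) with hp
  set E : ℂ → ℂ := fun y => Complex.exp (-(V.eval y) / (2 * hbar)) with hEdef
  have hEd : ∀ y : ℂ, HasDerivAt E (E y * (-(V.derivative.eval y) / (2 * hbar))) y :=
    fun y => (((V.hasDerivAt y).neg).div_const (2 * hbar)).cexp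
  set q : Polynomial ℂ := C (2 * hbar) * derivative p - p * derivative V with hqdef
  have hfun : (fun y : ℂ => (∏ i, (y - s i)) * Complex.exp (-(V.eval y) / (2 * hbar)))
      = fun y => p.eval y * E y := by
    funext z; rw [hp]; simp [eval_prod]; exact Or.inl rfl
  have hψ1 : deriv (fun y : ℂ => (∏ i, (y - s i)) * Complex.exp (-(V.eval y) / (2 * hbar)))
      = fun y => (q.eval y / (2 * hbar)) * E y := by
    funext y
    rw [hfun, HasDerivAt.deriv (f := fun y => p.eval y * E y) ((p.hasDerivAt y).mul (hEd y)), hqdef]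
    simp only [eval_sub, eval_mul, eval_C]
    field_simp
    ring
  have hψ2 : deriv (deriv (fun y : ℂ =>
        (∏ i, (y - s i)) * Complex.exp (-(V.eval y) / (2 * hbar)))) x
      = ((derivative q).eval x / (2 * hbar)) * E x
        + (q.eval x / (2 * hbar)) * (E x * (-(V.derivative.eval x) / (2 * hbar))) := by
    rw [hψ1]
    exact (((q.hasDerivAt x).div_const (2 * hbar)).mul (hEd x)).deriv
  have hq' : derivative q = C (2 * hbar) * derivative (derivative p)
      - (derivative p * derivative V + p * derivative (derivative V)) := by
    rw [hqdef]
    simp [derivative_mul]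
  have h1 : derivative p = ∑ i, ∏ j ∈ univ.erase i, (X - C (s j)) := by
    rw [hp, deriv_fin_prod]; simp
  have hps : (derivative p).eval x = ∑ i, ∏ j ∈ univ.erase i, (x - s j) := by
    rw [h1]; simp [eval_finset_sum, eval_prod]
  have hfac : ∀ i, p.eval x = (x - s i) * ∏ j ∈ univ.erase i, (x - s j) := by
    intro i
    rw [hp]
    simp only [eval_prod, eval_sub, eval_X, eval_C]
    exact (Finset.mul_prod_erase univ _ (Finset.mem_univ i)).symm
  have hQx : ∀ i, p.eval x * (Q i).eval x
      = (∏ j ∈ univ.erase i, (x - s j)) * (V.derivative.eval x - V.derivative.eval (s i)) := by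
    intro i
    have h := congrArg (eval x) (hQ i)
    simp only [eval_sub, eval_mul, eval_C, eval_X] at h
    have h3 : (x - s i) * (∏ j ∈ univ.erase i, (x - s j)) * (Q i).eval x
        = (∏ j ∈ univ.erase i, (x - s j)) * ((x - s i) * (Q i).eval x) := by ring
    rw [hfac i, h3, ← h]
  have hsum : p.eval x * ∑ i, (Q i).eval x
      = V.derivative.eval x * (derivative p).eval x
        - hbar * (derivative (derivative p)).eval x := by
    rw [Finset.mul_sum]
    calc ∑ i, p.eval x * (Q i).eval x
        = ∑ i, ((∏ j ∈ univ.erase i, (x - s j)) * V.derivative.eval x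
            - V.derivative.eval (s i) * ∏ j ∈ univ.erase i, (x - s j)) := by
          refine Finset.sum_congr rfl fun i _ => ?_
          rw [hQx i]; ring
      _ = (∑ i, ∏ j ∈ univ.erase i, (x - s j)) * V.derivative.eval x
            - ∑ i, V.derivative.eval (s i) * ∏ j ∈ univ.erase i, (x - s j) := by
          rw [Finset.sum_sub_distrib, Finset.sum_mul]
      _ = V.derivative.eval x * (derivative p).eval x
            - hbar * (derivative (derivative p)).eval x := by
          rw [← hps, key_sum m hbar V s hs hBethe x, ← hp]
          ring
  rw [hψ2, hq']
  rw [show (∏ i, (x - s i)) = p.eval x by rw [hp]; simp [eval_prod]]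
  rw [show Complex.exp (-(Polynomial.eval x V) / (2 * hbar)) = E x from rfl]
  simp only [eval_sub, eval_mul, eval_add, eval_C, eval_pow, eval_finset_sum, hqdef]
  field_simp
  linear_combination (16 * hbar * E x) * hsum
end

section
/- Assume the Bethe equations hold. Define Y(x) = V′(x) − 2ħ ∑_{i=1}^m 1/(x − s_i) for x ∈ ℂ \ {s_1,…,s_m}, and let U = (V′)² − 2ħV″ − 4ħ ∑_{i=1}^m Q_i ∈ ℂ[X], where for each i, Q_i ∈ ℂ[X] is the unique polynomial with V′ − V′(s_i) = (X − s_i)·Q_i. Then Y satisfies the Riccati equation Y(x)² − 2ħ Y′(x) = U(x) for every x ∈ ℂ \ {s_1,…,s_m}. -/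
open Finset Polynomial

/-- Assume the Bethe equations. With
`Y(x) = V′(x) − 2ħ ∑ i, 1/(x − s i)` and
`U = (V′)² − 2ħ V″ − 4ħ ∑ i, Q i`, where `Q i` is the (unique) polynomial with
`V′ − V′(s i) = (X − s i)·Q i`, the Riccati equation `Y(x)² − 2ħ Y′(x) = U(x)` holds for
every `x ∈ ℂ \ {s 1, …, s m}`. -/
theorem riccati_equation (m : ℕ) (hbar : ℂ) (hhbar : hbar ≠ 0) (V : Polynomial ℂ)
    (s : Fin m → ℂ) (hs : Function.Injective s)
    (hBethe : ∀ i, V.derivative.eval (s i)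
      = 2 * hbar * ∑ j ∈ univ.erase i, 1 / (s i - s j))
    (Q : Fin m → Polynomial ℂ)
    (hQ : ∀ i, V.derivative - C (V.derivative.eval (s i)) = (X - C (s i)) * Q i)
    (x : ℂ) (hx : ∀ i, x ≠ s i) :
    (V.derivative.eval x - 2 * hbar * ∑ i, 1 / (x - s i)) ^ 2
        - 2 * hbar *
          deriv (fun y : ℂ => V.derivative.eval y - 2 * hbar * ∑ i, 1 / (y - s i)) x
      = (V.derivative ^ 2 - C (2 * hbar) * derivative V.derivative
          - C (4 * hbar) * ∑ i, Q i).eval x := by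
  have hxs : ∀ i, x - s i ≠ 0 := fun i => sub_ne_zero.mpr (hx i)
  -- derivative computation
  have h1 : ∀ i : Fin m, HasDerivAt (fun y : ℂ => 1 / (y - s i)) (-(1 / (x - s i) ^ 2)) x := by
    intro i
    have := ((hasDerivAt_id x).sub_const (s i)).inv (hxs i)
    simpa [one_div, neg_div, Pi.inv_def] using this
  have hd : HasDerivAt (fun y : ℂ => V.derivative.eval y - 2 * hbar * ∑ i, 1 / (y - s i))
      (V.derivative.derivative.eval x - 2 * hbar * ∑ i, -(1 / (x - s i) ^ 2)) x := by
    exact (V.derivative.hasDerivAt x).sub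
      ((HasDerivAt.fun_sum (fun i _ => h1 i)).const_mul (2 * hbar))
  rw [hd.deriv]
  -- notation
  set A := V.derivative.eval x with hA
  -- key double-sum identity
  set D := ∑ i, ∑ j ∈ univ.erase i, (1 / (x - s i)) * (1 / (x - s j)) with hDdef
  have hss : ∀ i j : Fin m, j ≠ i → s i - s j ≠ 0 := by
    intro i j hij
    exact sub_ne_zero.mpr (fun h => hij (hs h.symm))
  have hterm : ∀ i : Fin m, ∀ j ∈ univ.erase i,
      (1 / (x - s i)) * (1 / (x - s j))
        = (1 / (x - s i)) * (s i - s j)⁻¹ - (1 / (x - s j)) * (s i - s j)⁻¹ := by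
    intro i j hj
    have hij : j ≠ i := (Finset.mem_erase.mp hj).1
    have e1 := hxs i; have e2 := hxs j; have e3 := hss i j hij
    field_simp
    ring
  have hswap : ∑ i, ∑ j ∈ univ.erase i, (1 / (x - s j)) * (s i - s j)⁻¹
      = - ∑ i, ∑ j ∈ univ.erase i, (1 / (x - s i)) * (s i - s j)⁻¹ := by
    rw [Finset.sum_comm' (t' := univ) (s' := fun j => univ.erase j)
      (by intro i j; simp [eq_comm, and_comm])]
    rw [← Finset.sum_neg_distrib]
    refine Finset.sum_congr rfl fun j _ => ?_
    rw [← Finset.sum_neg_distrib]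
    refine Finset.sum_congr rfl fun i hi => ?_
    have hij : i ≠ j := (Finset.mem_erase.mp hi).1
    have : (s i - s j)⁻¹ = -(s j - s i)⁻¹ := by rw [← neg_sub (s j) (s i), inv_neg]
    rw [this]; ring
  have hD : hbar * D = ∑ i, V.derivative.eval (s i) * (1 / (x - s i)) := by
    have : D = 2 * ∑ i, (1 / (x - s i)) * ∑ j ∈ univ.erase i, (s i - s j)⁻¹ := by
      rw [hDdef, Finset.sum_congr rfl (fun i _ => Finset.sum_congr rfl (hterm i))]
      simp only [Finset.sum_sub_distrib]
      rw [hswap, sub_neg_eq_add, two_mul]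
      congr 1 <;> exact Finset.sum_congr rfl fun i _ => (Finset.mul_sum _ _ _).symm
    rw [this]
    rw [Finset.mul_sum, Finset.mul_sum]
    refine Finset.sum_congr rfl fun i _ => ?_
    rw [hBethe i]
    simp only [one_div]
    ring
  -- sum of squares identity
  have hS2 : (∑ i, 1 / (x - s i)) ^ 2 = (∑ i, 1 / (x - s i) ^ 2) + D := by
    rw [sq, Finset.sum_mul_sum]
    rw [hDdef, ← Finset.sum_add_distrib]
    refine Finset.sum_congr rfl fun i _ => ?_
    rw [← Finset.add_sum_erase _ _ (Finset.mem_univ i)]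
    congr 1
    rw [div_mul_div_comm, one_mul, sq]
  -- evaluate Q
  have hF : ∑ i, (Q i).eval x = A * (∑ i, 1 / (x - s i))
      - ∑ i, V.derivative.eval (s i) * (1 / (x - s i)) := by
    rw [Finset.mul_sum, ← Finset.sum_sub_distrib]
    refine Finset.sum_congr rfl fun i _ => ?_
    have := congrArg (Polynomial.eval x) (hQ i)
    simp only [eval_sub, eval_mul, eval_X, eval_C] at this
    have hxi := hxs i
    field_simp
    first
    | linear_combination this
    | linear_combination -this
  -- RHS
  simp only [eval_sub, eval_mul, eval_pow, eval_C, eval_finset_sum, ← hA]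
  rw [Finset.sum_neg_distrib]
  linear_combination (4*hbar^2) * hS2 + 4*hbar * hD + 4*hbar * hF
end

section
/- Let s_1, …, s_m be pairwise distinct complex numbers, S = {s_1,…,s_m}, and let c_1, …, c_m : ℂ \ S → ℂ be functions satisfying the symmetry relation ∑_{i=1}^m c_i(x₀)/(x − s_i)² = ∑_{i=1}^m c_i(x)/(x₀ − s_i)² for all x ≠ x₀ in ℂ \ S. Then there exists a unique symmetric complex m×m matrix A such that c_i(x) = 2 ∑_{j=1}^m A_{ij}/(x − s_j)² for every i and every x ∈ ℂ \ S. (Consequently a kernel G(x₀,x) = 1/(x−x₀) + ∑_i c_i(x₀)/(x−s_i) whose x-derivative B = −(1/2)∂_x G is symmetric must have the form G(x₀,x) = 1/(x−x₀) + 2∑_{i,j} A_{ij}/((x−s_i)(x₀−s_j)²).) -/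
open Finset Polynomial

lemma indep_aux (m : ℕ) (s : Fin m → ℂ) (hs : Function.Injective s)
    (v : Fin m → ℂ)
    (hv : ∀ x : ℂ, (∀ j, x ≠ s j) → ∑ j, v j / (x - s j) ^ 2 = 0) :
    v = 0 := by
  classical
  set P : ℂ[X] := ∑ j, C (v j) * ∏ l ∈ univ.erase j, (X - C (s l)) ^ 2 with hP
  have hPeval : ∀ x : ℂ, P.eval x = ∑ j, v j * ∏ l ∈ univ.erase j, (x - s l) ^ 2 := by
    intro x
    simp [hP, eval_finset_sum, eval_prod]
  have hProot : ∀ x : ℂ, (∀ j, x ≠ s j) → P.eval x = 0 := by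
    intro x hx
    have h0 : ∀ j : Fin m, (x - s j) ^ 2 ≠ 0 :=
      fun j => pow_ne_zero _ (sub_ne_zero.mpr (hx j))
    rw [hPeval]
    calc ∑ j, v j * ∏ l ∈ univ.erase j, (x - s l) ^ 2
        = ∑ j, (v j / (x - s j) ^ 2) * ∏ l, (x - s l) ^ 2 := by
          refine Finset.sum_congr rfl fun j _ => ?_
          rw [← Finset.mul_prod_erase univ _ (mem_univ j),
            div_mul_eq_mul_div, mul_comm ((x - s j) ^ 2), ← mul_assoc,
            mul_div_assoc, div_self (h0 j), mul_one]
      _ = (∑ j, v j / (x - s j) ^ 2) * ∏ l, (x - s l) ^ 2 := by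
          rw [Finset.sum_mul]
      _ = 0 := by rw [hv x hx, zero_mul]
  have hP0 : P = 0 := by
    apply Polynomial.eq_zero_of_infinite_isRoot
    apply Set.Infinite.mono (s := (Set.range s)ᶜ)
    · intro x hx
      simp only [Set.mem_compl_iff, Set.mem_range, not_exists] at hx
      exact hProot x fun j => fun h => hx j h.symm
    · exact (Set.finite_range s).infinite_compl
  funext k
  have hk := hPeval (s k)
  rw [hP0, eval_zero] at hk
  have hsingle : ∑ j, v j * ∏ l ∈ univ.erase j, (s k - s l) ^ 2
      = v k * ∏ l ∈ univ.erase k, (s k - s l) ^ 2 := by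
    refine Finset.sum_eq_single k (fun j _ hj => ?_) (fun h => absurd (mem_univ k) h)
    have hkmem : k ∈ univ.erase j := Finset.mem_erase.mpr ⟨(Ne.symm hj), mem_univ k⟩
    rw [← Finset.mul_prod_erase _ _ hkmem]
    simp
  rw [hsingle] at hk
  have hne : ∏ l ∈ univ.erase k, (s k - s l) ^ 2 ≠ 0 := by
    refine Finset.prod_ne_zero_iff.mpr fun l hl => ?_
    have : l ≠ k := (Finset.mem_erase.mp hl).1
    exact pow_ne_zero _ (sub_ne_zero.mpr fun h => this (hs h.symm))
  have := mul_eq_zero.mp (hk.symm)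
  simp only [Pi.zero_apply]
  tauto

/-- If functions `c i : ℂ \ {s 1,…,s m} → ℂ` satisfy the symmetry
relation `∑ i, c i x₀ / (x − s i)² = ∑ i, c i x / (x₀ − s i)²` for all distinct
`x, x₀` outside `{s 1,…,s m}`, then there is a unique symmetric complex `m×m` matrix `A`
with `c i x = 2 ∑ j, A i j / (x − s j)²` for all `i` and all `x` outside `{s 1,…,s m}`. -/
theorem symmetric_kernel_structure (m : ℕ) (s : Fin m → ℂ) (hs : Function.Injective s)
    (c : Fin m → ℂ → ℂ)
    (hsym : ∀ x₀ x : ℂ, (∀ i, x₀ ≠ s i) → (∀ i, x ≠ s i) → x ≠ x₀ →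
      ∑ i, c i x₀ / (x - s i) ^ 2 = ∑ i, c i x / (x₀ - s i) ^ 2) :
    ∃! A : Matrix (Fin m) (Fin m) ℂ,
      (∀ i j, A i j = A j i) ∧
      ∀ i, ∀ x : ℂ, (∀ j, x ≠ s j) → c i x = 2 * ∑ j, A i j / (x - s j) ^ 2 := by
  classical
  have indep := indep_aux m s hs
  -- symmetry without the x ≠ x₀ condition
  have hsym' : ∀ x₀ x : ℂ, (∀ i, x₀ ≠ s i) → (∀ i, x ≠ s i) →
      ∑ i, c i x₀ / (x - s i) ^ 2 = ∑ i, c i x / (x₀ - s i) ^ 2 := by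
    intro x₀ x hx₀ hx
    by_cases h : x = x₀
    · subst h; rfl
    · exact hsym x₀ x hx₀ hx h
  set G : ℂ → (Fin m → ℂ) := fun x j => 1 / (x - s j) ^ 2 with hG
  set T : Set ℂ := {x | ∀ j, x ≠ s j} with hT
  have hspan : Submodule.span ℂ (G '' T) = ⊤ := by
    by_contra h
    obtain ⟨f, hf0, hfbot⟩ :=
      Submodule.exists_dual_map_eq_bot_of_lt_top (lt_top_iff_ne_top.mpr h) inferInstance
    set v : Fin m → ℂ := fun j => f (fun k => if j = k then 1 else 0) with hv
    have hv0 : v = 0 := by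
      apply indep
      intro x hx
      have hmem : G x ∈ Submodule.span ℂ (G '' T) :=
        Submodule.subset_span ⟨x, hx, rfl⟩
      have hfx : f (G x) = 0 := by
        have : f (G x) ∈ (Submodule.span ℂ (G '' T)).map f :=
          Submodule.mem_map_of_mem hmem
        rw [hfbot] at this
        simpa using this
      rw [LinearMap.pi_apply_eq_sum_univ f (G x)] at hfx
      rw [← hfx]
      refine Finset.sum_congr rfl fun j _ => ?_
      simp only [hv, hG, smul_eq_mul, div_eq_mul_inv, one_mul]
      ring
    apply hf0
    refine LinearMap.ext fun u => ?_
    rw [LinearMap.pi_apply_eq_sum_univ f u]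
    refine Finset.sum_eq_zero fun i _ => ?_
    have hz : f (fun j => if i = j then 1 else 0) = 0 := congrFun hv0 i
    rw [hz, smul_zero]
  -- representation of basis vectors
  have hrep : ∀ i : Fin m, ∃ (n : ℕ) (a : Fin n → ℂ) (y : Fin n → ℂ),
      (∀ k, ∀ j, y k ≠ s j) ∧
      ∀ j, (if i = j then (1 : ℂ) else 0) = ∑ k, a k * G (y k) j := by
    intro i
    have hmem : (fun j => if i = j then (1 : ℂ) else 0) ∈ Submodule.span ℂ (G '' T) := by
      rw [hspan]; trivial
    obtain ⟨n, a, g, hsum⟩ := Submodule.mem_span_set'.mp hmem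
    choose y hyT hyG using fun k => (g k).2
    refine ⟨n, a, y, hyT, fun j => ?_⟩
    have := congrFun hsum j
    rw [Finset.sum_apply] at this
    rw [← this]
    refine Finset.sum_congr rfl fun k _ => ?_
    rw [← hyG k]
    simp
  choose n acoef y hyT hyrep using hrep
  set B : Matrix (Fin m) (Fin m) ℂ := fun i j => ∑ k, acoef i k * c j (y i k) with hB
  -- representation of c
  have hcrep : ∀ i, ∀ x : ℂ, (∀ j, x ≠ s j) → c i x = ∑ j, B i j / (x - s j) ^ 2 := by
    intro i x hx
    calc c i x = ∑ j, (if i = j then (1 : ℂ) else 0) * c j x := by simp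
      _ = ∑ j, (∑ k, acoef i k * G (y i k) j) * c j x := by
          refine Finset.sum_congr rfl fun j _ => ?_
          rw [← hyrep i j]
      _ = ∑ k, acoef i k * ∑ j, c j x / (y i k - s j) ^ 2 := by
          simp only [Finset.sum_mul]
          rw [Finset.sum_comm]
          refine Finset.sum_congr rfl fun k _ => ?_
          rw [Finset.mul_sum]
          refine Finset.sum_congr rfl fun j _ => ?_
          simp only [hG, div_eq_mul_inv, one_mul]
          ring
      _ = ∑ k, acoef i k * ∑ j, c j (y i k) / (x - s j) ^ 2 := by
          refine Finset.sum_congr rfl fun k _ => ?_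
          rw [hsym' x (y i k) hx (hyT i k)]
      _ = ∑ j, B i j / (x - s j) ^ 2 := by
          simp only [Finset.mul_sum]
          rw [Finset.sum_comm]
          refine Finset.sum_congr rfl fun j _ => ?_
          rw [hB, Finset.sum_div]
          exact Finset.sum_congr rfl fun k _ => (mul_div_assoc _ _ _).symm
  -- symmetry of B
  have key : ∀ x₀ : ℂ, (∀ j, x₀ ≠ s j) → ∀ x : ℂ, (∀ j, x ≠ s j) →
      ∑ i, (∑ j, (B i j - B j i) / (x₀ - s j) ^ 2) / (x - s i) ^ 2 = 0 := by
    intro x₀ hx₀ x hx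
    have h1 : ∑ i, (∑ j, B i j / (x₀ - s j) ^ 2) / (x - s i) ^ 2
        = ∑ i, (∑ j, B i j / (x - s j) ^ 2) / (x₀ - s i) ^ 2 := by
      calc ∑ i, (∑ j, B i j / (x₀ - s j) ^ 2) / (x - s i) ^ 2
          = ∑ i, c i x₀ / (x - s i) ^ 2 :=
            Finset.sum_congr rfl fun i _ => by rw [← hcrep i x₀ hx₀]
        _ = ∑ i, c i x / (x₀ - s i) ^ 2 := hsym' x₀ x hx₀ hx
        _ = ∑ i, (∑ j, B i j / (x - s j) ^ 2) / (x₀ - s i) ^ 2 :=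
            Finset.sum_congr rfl fun i _ => by rw [← hcrep i x hx]
    have h2 : ∑ i, (∑ j, B j i / (x₀ - s j) ^ 2) / (x - s i) ^ 2
        = ∑ i, (∑ j, B i j / (x - s j) ^ 2) / (x₀ - s i) ^ 2 := by
      simp only [Finset.sum_div]
      rw [Finset.sum_comm]
      exact Finset.sum_congr rfl fun i _ => Finset.sum_congr rfl fun j _ =>
        div_right_comm _ _ _
    calc ∑ i, (∑ j, (B i j - B j i) / (x₀ - s j) ^ 2) / (x - s i) ^ 2
        = ∑ i, ((∑ j, B i j / (x₀ - s j) ^ 2) / (x - s i) ^ 2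
            - (∑ j, B j i / (x₀ - s j) ^ 2) / (x - s i) ^ 2) := by
          refine Finset.sum_congr rfl fun i _ => ?_
          rw [← sub_div, ← Finset.sum_sub_distrib]
          congr 1
          exact Finset.sum_congr rfl fun j _ => (sub_div _ _ _)
      _ = 0 := by
          rw [Finset.sum_sub_distrib, h1, h2, sub_self]
  have hBsymm : ∀ i j, B i j = B j i := by
    have h3 : ∀ x₀ : ℂ, (∀ j, x₀ ≠ s j) →
        (fun i => ∑ j, (B i j - B j i) / (x₀ - s j) ^ 2) = 0 := fun x₀ hx₀ =>
      indep _ (fun x hx => key x₀ hx₀ x hx)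
    intro i j
    have h4 : (fun j => B i j - B j i) = 0 :=
      indep _ (fun x₀ hx₀ => congrFun (h3 x₀ hx₀) i)
    have := congrFun h4 j
    simpa [sub_eq_zero] using this
  -- conclusion
  refine ⟨fun i j => B i j / 2, ⟨fun i j => ?_, fun i x hx => ?_⟩, ?_⟩
  · show B i j / 2 = B j i / 2
    rw [hBsymm i j]
  · show c i x = 2 * ∑ j, B i j / 2 / (x - s j) ^ 2
    rw [hcrep i x hx, Finset.mul_sum]
    refine Finset.sum_congr rfl fun j _ => ?_
    have hd : (x - s j) ^ 2 ≠ 0 := pow_ne_zero _ (sub_ne_zero.mpr (hx j))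
    field_simp
  · rintro A' ⟨hA'symm, hA'rep⟩
    funext i j
    have hrow : (fun j => A' i j - B i j / 2) = 0 := by
      apply indep
      intro x hx
      have h5 : (2 : ℂ) * ∑ j, A' i j / (x - s j) ^ 2 = ∑ j, B i j / (x - s j) ^ 2 := by
        rw [← hA'rep i x hx, hcrep i x hx]
      calc ∑ j, (A' i j - B i j / 2) / (x - s j) ^ 2
          = ∑ j, (A' i j / (x - s j) ^ 2 - (B i j / (x - s j) ^ 2) / 2) := by
            refine Finset.sum_congr rfl fun j _ => ?_
            rw [sub_div, div_div, div_div, mul_comm]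
        _ = ∑ j, A' i j / (x - s j) ^ 2 - (∑ j, B i j / (x - s j) ^ 2) / 2 := by
            rw [Finset.sum_sub_distrib, Finset.sum_div]
        _ = 0 := by rw [← h5]; ring
    exact sub_eq_zero.mp (congrFun hrow j)
end

section
/- Under the kernel hypotheses, for every x₀ ∈ ℂ \ S and every i ∈ {1,…,m}: ħ K(x₀, s_i) = ∑_{j=1}^m A_{ij}/(x₀ − s_j)². -/
open Finset Polynomial

/-- Under the kernel hypotheses — with
`ω(x) = ħ ∑ i, 1/(x − s i)`, `G(x₀,x) = 1/(x − x₀) + 2 ∑ i j, A i j /((x − s i)(x₀ − s j)²)`,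
and, for `x₀ ∉ S`, a holomorphic function `K(x₀,·)` on an open set `U ⊇ S` satisfying
`ħ ∂ₓK(x₀,x) = (2ω(x) − V′(x)) K(x₀,x) − G(x₀,x)` on `U \ (S ∪ {x₀})` — we have,
for every `i`: `ħ K(x₀, s i) = ∑ j, A i j / (x₀ − s j)²`. -/
theorem kernel_value_at_si (m : ℕ) (hbar : ℂ) (hhbar : hbar ≠ 0) (V : Polynomial ℂ)
    (s : Fin m → ℂ) (hs : Function.Injective s)
    (A : Matrix (Fin m) (Fin m) ℂ)
    (x₀ : ℂ) (hx₀ : ∀ i, x₀ ≠ s i)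
    (U : Set ℂ) (K : ℂ → ℂ) (hU : IsOpen U) (hSU : ∀ i, s i ∈ U)
    (hK : DifferentiableOn ℂ K U)
    (hODE : ∀ x ∈ U, (∀ i, x ≠ s i) → x ≠ x₀ →
      hbar * deriv K x
        = (2 * (hbar * ∑ i, 1 / (x - s i)) - V.derivative.eval x) * K x
          - (1 / (x - x₀) + 2 * ∑ i, ∑ j, A i j / ((x - s i) * (x₀ - s j) ^ 2))) :
    ∀ i, hbar * K (s i) = ∑ j, A i j / (x₀ - s j) ^ 2 := by
  intro i
  have hsi : s i ∈ U := hSU i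
  have hmem : U ∈ nhds (s i) := hU.mem_nhds hsi
  have hKc : ContinuousAt K (s i) := (hK.differentiableAt hmem).continuousAt
  have hder : ContinuousAt (deriv K) (s i) :=
    (((hK.analyticOnNhd hU).deriv (s i) hsi)).continuousAt
  set C : ℂ := ∑ k, A i k / (x₀ - s k) ^ 2 with hC
  set h : ℂ → ℂ := fun x =>
    (2 * hbar * (1 + (x - s i) * ∑ j ∈ Finset.univ.erase i, 1 / (x - s j))
      - (x - s i) * V.derivative.eval x) * K x
    - ((x - s i) / (x - x₀)
      + 2 * (C + (x - s i) *
          ∑ j ∈ Finset.univ.erase i, ∑ k, A j k / ((x - s j) * (x₀ - s k) ^ 2))) with hh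
  -- h is continuous at s i
  have hcont : ContinuousAt h (s i) := by
    apply ContinuousAt.sub
    · apply ContinuousAt.mul
      · apply ContinuousAt.sub
        · apply ContinuousAt.mul continuousAt_const
          apply ContinuousAt.add continuousAt_const
          apply ContinuousAt.mul (by fun_prop)
          refine tendsto_finset_sum _ fun j hj => ?_
          exact ContinuousAt.div continuousAt_const (by fun_prop)
            (sub_ne_zero.2 (fun e => (Finset.mem_erase.1 hj).1 (hs e.symm)))
        · fun_prop
      · exact hKc
    · apply ContinuousAt.add
      · exact ContinuousAt.div (by fun_prop) (by fun_prop)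
          (sub_ne_zero.2 (fun e => hx₀ i e.symm))
      · apply ContinuousAt.mul continuousAt_const
        apply ContinuousAt.add continuousAt_const
        apply ContinuousAt.mul (by fun_prop)
        refine tendsto_finset_sum _ fun j hj => ?_
        refine tendsto_finset_sum _ fun k hk => ?_
        refine ContinuousAt.div continuousAt_const (by fun_prop) ?_
        refine mul_ne_zero (sub_ne_zero.2 (fun e => (Finset.mem_erase.1 hj).1 (hs e.symm))) ?_
        exact pow_ne_zero _ (sub_ne_zero.2 (hx₀ k))
  have hval : h (s i) = 2 * hbar * K (s i) - 2 * C := by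
    simp [hh]
  -- eventual equality on punctured neighborhood
  have hev : ∀ᶠ x in nhdsWithin (s i) {(s i)}ᶜ,
      (x - s i) * (hbar * deriv K x) = h x := by
    have h1 : ∀ᶠ x in nhds (s i), x ∈ U := hmem
    have h2 : ∀ᶠ x in nhds (s i), ∀ j ∈ Finset.univ.erase i, x ≠ s j := by
      rw [Filter.eventually_all_finset]
      intro j hj
      exact eventually_ne_nhds (fun e => (Finset.mem_erase.1 hj).1 (hs e.symm))
    have h3 : ∀ᶠ x in nhds (s i), x ≠ x₀ := eventually_ne_nhds (fun e => hx₀ i e.symm)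
    filter_upwards [nhdsWithin_le_nhds h1, nhdsWithin_le_nhds h2,
      nhdsWithin_le_nhds h3, self_mem_nhdsWithin] with x hxU hxj hx0 hxi
    have hxi' : x ≠ s i := hxi
    have hxall : ∀ j, x ≠ s j := by
      intro j
      by_cases hji : j = i
      · subst hji; exact hxi'
      · exact hxj j (Finset.mem_erase.2 ⟨hji, Finset.mem_univ j⟩)
    have hxsne : x - s i ≠ 0 := sub_ne_zero.2 hxi'
    rw [hODE x hxU hxall hx0, hh]
    have e1 : ∑ j, 1 / (x - s j)
        = 1 / (x - s i) + ∑ j ∈ Finset.univ.erase i, 1 / (x - s j) :=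
      (Finset.add_sum_erase _ _ (Finset.mem_univ i)).symm
    have e2 : ∑ j, ∑ k, A j k / ((x - s j) * (x₀ - s k) ^ 2)
        = (∑ k, A i k / ((x - s i) * (x₀ - s k) ^ 2))
          + ∑ j ∈ Finset.univ.erase i, ∑ k, A j k / ((x - s j) * (x₀ - s k) ^ 2) :=
      (Finset.add_sum_erase _ _ (Finset.mem_univ i)).symm
    have e3 : (x - s i) * ∑ k, A i k / ((x - s i) * (x₀ - s k) ^ 2) = C := by
      rw [Finset.mul_sum, hC]
      refine Finset.sum_congr rfl fun k _ => ?_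
      rw [mul_div_assoc', mul_div_mul_left _ _ hxsne]
    have e4 : (x - s i) * (1 / (x - s i)) = 1 := by
      field_simp
    rw [e1, e2]
    linear_combination (2 * hbar * K x) * e4 - 2 * e3
  -- limits
  have hlim1 : Filter.Tendsto (fun x => (x - s i) * (hbar * deriv K x))
      (nhdsWithin (s i) {(s i)}ᶜ) (nhds 0) := by
    have : Filter.Tendsto (fun x => (x - s i) * (hbar * deriv K x)) (nhds (s i))
        (nhds ((s i - s i) * (hbar * deriv K (s i)))) := by
      exact (ContinuousAt.mul (by fun_prop) (continuousAt_const.mul hder))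
    simpa using this.mono_left nhdsWithin_le_nhds
  have hlim2 : Filter.Tendsto (fun x => (x - s i) * (hbar * deriv K x))
      (nhdsWithin (s i) {(s i)}ᶜ) (nhds (2 * hbar * K (s i) - 2 * C)) := by
    rw [← hval]
    exact (hcont.continuousWithinAt.tendsto).congr' (by filter_upwards [hev] with x hx using hx.symm)
  have := tendsto_nhds_unique hlim1 hlim2
  have hEq : hbar * K (s i) = C := by linear_combination -this / 2
  exact hEq
end

section
/- Under the kernel hypotheses, for every x₀ ∈ ℂ \ S and every i ∈ {1,…,m}: ħ (∂_x K)(x₀, s_i) = −1/(x₀ − s_i) + V′(s_i) K(x₀, s_i) − 2ħ ∑_{j≠i} (K(x₀, s_i) − K(x₀, s_j))/(s_i − s_j). -/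
open Finset Polynomial Filter Topology

/-- Under the kernel hypotheses (as in Statement 7), for every `i`:
`ħ (∂ₓK)(x₀, s i) = −1/(x₀ − s i) + V′(s i) K(x₀, s i)
  − 2ħ ∑_{j ≠ i} (K(x₀, s i) − K(x₀, s j))/(s i − s j)`. -/
theorem kernel_derivative_at_si (m : ℕ) (hbar : ℂ) (hhbar : hbar ≠ 0) (V : Polynomial ℂ)
    (s : Fin m → ℂ) (hs : Function.Injective s)
    (A : Matrix (Fin m) (Fin m) ℂ)
    (x₀ : ℂ) (hx₀ : ∀ i, x₀ ≠ s i)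
    (U : Set ℂ) (K : ℂ → ℂ) (hU : IsOpen U) (hSU : ∀ i, s i ∈ U)
    (hK : DifferentiableOn ℂ K U)
    (hODE : ∀ x ∈ U, (∀ i, x ≠ s i) → x ≠ x₀ →
      hbar * deriv K x
        = (2 * (hbar * ∑ i, 1 / (x - s i)) - V.derivative.eval x) * K x
          - (1 / (x - x₀) + 2 * ∑ i, ∑ j, A i j / ((x - s i) * (x₀ - s j) ^ 2))) :
    ∀ i, hbar * deriv K (s i)
      = -1 / (x₀ - s i) + V.derivative.eval (s i) * K (s i)
        - 2 * hbar * ∑ j ∈ univ.erase i, (K (s i) - K (s j)) / (s i - s j) := by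
  classical
  have hKan := hK.analyticOnNhd hU
  have hKc : ∀ k, ContinuousAt K (s k) := fun k => (hKan (s k) (hSU k)).continuousAt
  have hdKc : ∀ k, ContinuousAt (deriv K) (s k) :=
    fun k => (hKan.deriv (s k) (hSU k)).continuousAt
  set B : Fin m → ℂ := fun l => ∑ j, A l j / (x₀ - s j) ^ 2 with hBdef
  -- eventual facts near each s k
  have hev : ∀ k : Fin m, ∀ᶠ x in 𝓝[≠] (s k), x ∈ U ∧ (∀ j, x ≠ s j) ∧ x ≠ x₀ := by
    intro k
    have h1 : ∀ᶠ x in 𝓝[≠] (s k), x ∈ U :=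
      nhdsWithin_le_nhds (hU.eventually_mem (hSU k))
    have h2 : ∀ᶠ x in 𝓝[≠] (s k), x ≠ x₀ :=
      nhdsWithin_le_nhds (eventually_ne_nhds (Ne.symm (hx₀ k)))
    have h3 : ∀ᶠ x in 𝓝[≠] (s k), ∀ j, x ≠ s j := by
      rw [Filter.eventually_all]
      intro j
      rcases eq_or_ne j k with rfl | hj
      · exact self_mem_nhdsWithin
      · exact nhdsWithin_le_nhds (eventually_ne_nhds fun h => hj (hs h.symm))
    filter_upwards [h1, h2, h3] with x hx1 hx2 hx3
    exact ⟨hx1, hx3, hx2⟩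
  -- rewritten ODE
  have hODE' : ∀ x, x ∈ U → (∀ j, x ≠ s j) → x ≠ x₀ →
      hbar * deriv K x = 2 * (∑ j, (hbar * K x - B j) / (x - s j))
        - V.derivative.eval x * K x - 1 / (x - x₀) := by
    intro x hxU hxS hxx0
    rw [hODE x hxU hxS hxx0]
    have hsum : ∑ j, (hbar * K x - B j) / (x - s j)
        = (hbar * K x) * ∑ j, 1 / (x - s j)
          - ∑ k, ∑ j, A k j / ((x - s k) * (x₀ - s j) ^ 2) := by
      rw [Finset.mul_sum, ← Finset.sum_sub_distrib]
      refine Finset.sum_congr rfl fun k _ => ?_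
      rw [sub_div]
      congr 1
      · rw [mul_one_div]
      · simp only [hBdef]
        rw [Finset.sum_div]
        refine Finset.sum_congr rfl fun j _ => ?_
        rw [div_div]
        ring
    rw [hsum]; ring
  -- residue identities
  have hres : ∀ k, B k = hbar * K (s k) := by
    intro k
    have tL : Tendsto (fun x => (x - s k) * (hbar * deriv K x)) (𝓝[≠] s k) (𝓝 0) := by
      have h1 : Tendsto (fun x : ℂ => x - s k) (𝓝 (s k)) (𝓝 (s k - s k)) :=
        (continuous_id.sub continuous_const).tendsto (s k)
      rw [sub_self] at h1
      have := h1.mul ((hdKc k).const_mul hbar)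
      simpa using this.mono_left nhdsWithin_le_nhds
    set g : ℂ → ℂ := fun x =>
      2 * ((hbar * K x - B k)
        + ∑ j ∈ univ.erase k, (x - s k) * ((hbar * K x - B j) / (x - s j)))
        - (x - s k) * (V.derivative.eval x * K x + 1 / (x - x₀)) with hgdef
    have cg : ContinuousAt g (s k) := by
      have c1 : ContinuousAt (fun x : ℂ => x - s k) (s k) :=
        (continuous_id.sub continuous_const).continuousAt
      have csum : ∀ j ∈ univ.erase k,
          ContinuousAt (fun x => (x - s k) * ((hbar * K x - B j) / (x - s j))) (s k) := by
        intro j hj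
        have hne : s k - s j ≠ 0 :=
          sub_ne_zero.mpr (hs.ne (Ne.symm (Finset.mem_erase.mp hj).1))
        exact c1.mul (((continuousAt_const.mul (hKc k)).sub continuousAt_const).div
          ((continuous_id.sub continuous_const).continuousAt) hne)
      have hx0k : s k - x₀ ≠ 0 := sub_ne_zero.mpr fun h => hx₀ k h.symm
      refine ContinuousAt.sub (continuousAt_const.mul (ContinuousAt.add
        ((continuousAt_const.mul (hKc k)).sub continuousAt_const) ?_))
        (c1.mul (ContinuousAt.add ((V.derivative.continuousAt).mul (hKc k))
          (continuousAt_const.div ((continuous_id.sub continuous_const).continuousAt) hx0k)))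
      exact tendsto_finset_sum _ csum
    have tR : Tendsto g (𝓝[≠] s k) (𝓝 (2 * (hbar * K (s k) - B k))) := by
      have hval : g (s k) = 2 * (hbar * K (s k) - B k) := by
        simp [hgdef]
      rw [← hval]
      exact cg.tendsto.mono_left nhdsWithin_le_nhds
    have heq : (fun x => (x - s k) * (hbar * deriv K x)) =ᶠ[𝓝[≠] s k] g := by
      filter_upwards [hev k, self_mem_nhdsWithin] with x hx hxk
      obtain ⟨hxU, hxS, hxx0⟩ := hx
      have hk : x - s k ≠ 0 := sub_ne_zero.mpr (hxS k)
      rw [hODE' x hxU hxS hxx0, hgdef]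
      have key : (x - s k) * ∑ j, (hbar * K x - B j) / (x - s j)
          = (hbar * K x - B k)
            + ∑ j ∈ univ.erase k, (x - s k) * ((hbar * K x - B j) / (x - s j)) := by
        rw [Finset.mul_sum, ← Finset.add_sum_erase _ _ (Finset.mem_univ k)]
        congr 1
        rw [mul_comm, div_mul_cancel₀ _ hk]
      linear_combination 2 * key
    have h0 := tendsto_nhds_unique (tL.congr' heq) tR
    linear_combination h0 / 2
  -- the regularized ODE
  intro i
  have hODE'' : ∀ᶠ x in 𝓝[≠] s i, hbar * deriv K x
      = 2 * ∑ j, hbar * ((K x - K (s j)) / (x - s j))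
        - V.derivative.eval x * K x - 1 / (x - x₀) := by
    filter_upwards [hev i] with x hx
    obtain ⟨hxU, hxS, hxx0⟩ := hx
    rw [hODE' x hxU hxS hxx0]
    have : ∀ j : Fin m, (hbar * K x - B j) / (x - s j)
        = hbar * ((K x - K (s j)) / (x - s j)) := by
      intro j
      rw [hres j, ← mul_sub, mul_div_assoc]
    rw [Finset.sum_congr rfl fun j _ => this j]
  have tL2 : Tendsto (fun x => hbar * deriv K x) (𝓝[≠] s i) (𝓝 (hbar * deriv K (s i))) :=
    ((hdKc i).const_mul hbar).mono_left nhdsWithin_le_nhds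
  have tR2 : Tendsto
      (fun x => 2 * ∑ j, hbar * ((K x - K (s j)) / (x - s j))
        - V.derivative.eval x * K x - 1 / (x - x₀)) (𝓝[≠] s i)
      (𝓝 (2 * (hbar * deriv K (s i)
          + ∑ j ∈ univ.erase i, hbar * ((K (s i) - K (s j)) / (s i - s j)))
        - V.derivative.eval (s i) * K (s i) - 1 / (s i - x₀))) := by
    have hx0i : s i - x₀ ≠ 0 := sub_ne_zero.mpr fun h => hx₀ i h.symm
    refine Tendsto.sub (Tendsto.sub (tendsto_const_nhds.mul ?_) ?_) ?_
    · have hsplit : (fun x => ∑ j, hbar * ((K x - K (s j)) / (x - s j)))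
          = fun x => hbar * ((K x - K (s i)) / (x - s i))
            + ∑ j ∈ univ.erase i, hbar * ((K x - K (s j)) / (x - s j)) := by
        funext x
        rw [← Finset.add_sum_erase _ _ (Finset.mem_univ i)]
      rw [hsplit]
      refine Tendsto.add ?_ ?_
      · have hdK := (hK.differentiableAt (hU.mem_nhds (hSU i))).hasDerivAt
        have := (hasDerivAt_iff_tendsto_slope.mp hdK).const_mul hbar
        refine this.congr fun x => ?_
        rw [slope_def_field]
      · refine tendsto_finset_sum _ fun j hj => ?_
        have hne : s i - s j ≠ 0 :=
          sub_ne_zero.mpr (hs.ne (Ne.symm (Finset.mem_erase.mp hj).1))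
        have ct : ContinuousAt (fun x => hbar * ((K x - K (s j)) / (x - s j))) (s i) :=
          continuousAt_const.mul (((hKc i).sub continuousAt_const).div
            ((continuous_id.sub continuous_const).continuousAt) hne)
        exact ct.tendsto.mono_left nhdsWithin_le_nhds
    · exact ((V.derivative.continuousAt.mul (hKc i)).tendsto).mono_left nhdsWithin_le_nhds
    · exact ((continuousAt_const.div
        ((continuous_id.sub continuous_const).continuousAt) hx0i).tendsto).mono_left
        nhdsWithin_le_nhds
  have hfin := tendsto_nhds_unique (tL2.congr' hODE'') tR2
  have hsum2 : ∑ j ∈ univ.erase i, hbar * ((K (s i) - K (s j)) / (s i - s j))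
      = hbar * ∑ j ∈ univ.erase i, (K (s i) - K (s j)) / (s i - s j) := by
    rw [Finset.mul_sum]
  have hx0i : x₀ - s i ≠ 0 := sub_ne_zero.mpr (hx₀ i)
  have hx0i' : s i - x₀ ≠ 0 := sub_ne_zero.mpr fun h => hx₀ i h.symm
  have h1x : (1 : ℂ) / (s i - x₀) = -1 / (x₀ - s i) := by
    rw [div_eq_div_iff hx0i' hx0i]; ring
  rw [hsum2, h1x] at hfin
  linear_combination -hfin
end

section
/- Under the kernel hypotheses, the points s_1, …, s_m necessarily satisfy the Bethe equations: for every i ∈ {1,…,m}, V′(s_i) = 2ħ ∑_{j≠i} 1/(s_i − s_j). In other words, the existence, for all x₀, of a recursion kernel K(x₀,·) analytic at all the s_i and solving the defining differential equation forces the s_i to be Bethe roots. -/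
open Finset Polynomial

open Filter in
private lemma bethe_lim1 (b : ℂ) :
    Tendsto (fun n : ℕ => ((n : ℂ) - b)⁻¹) atTop (nhds 0) := by
  apply Filter.tendsto_inv₀_cobounded.comp
  apply tendsto_norm_atTop_iff_cobounded.1
  have h : ∀ n : ℕ, (n : ℝ) - ‖b‖ ≤ ‖(n : ℂ) - b‖ := by
    intro n
    have := norm_sub_norm_le ((n : ℂ)) b
    simpa using this
  apply tendsto_atTop_mono h
  exact tendsto_atTop_add_const_right _ _ tendsto_natCast_atTop_atTop

open Filter in
private lemma bethe_lim2 (a b : ℂ) :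
    Tendsto (fun n : ℕ => (a - (n : ℂ)) * (((n : ℂ) - b) ^ 2)⁻¹) atTop (nhds 0) := by
  have key : ∀ n : ℕ, (a - (n : ℂ)) * (((n : ℂ) - b) ^ 2)⁻¹
      = (a - b) * (((n : ℂ) - b)⁻¹ * ((n : ℂ) - b)⁻¹) - ((n : ℂ) - b)⁻¹ := by
    intro n
    by_cases h : (n : ℂ) - b = 0
    · simp [h]
    · field_simp
      ring
  simp only [key]
  have h1 := bethe_lim1 b
  have := ((h1.mul h1).const_mul (a - b)).sub h1
  simpa using this

private lemma bethe_hasDerivAt_div (a b D C : ℂ) (hab : a - b ≠ 0) (hD : D ≠ 0) :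
    HasDerivAt (fun x : ℂ => C / ((x - b) * D)) (-(C / ((a - b) ^ 2 * D))) a := by
  have h1 : HasDerivAt (fun x : ℂ => (x - b) * D) D a := by
    simpa using ((hasDerivAt_id' (x := a)).sub_const b).mul_const D
  have h2 := (hasDerivAt_const a C).fun_div h1 (mul_ne_zero hab hD)
  refine h2.congr_deriv ?_
  field_simp
  ring

private lemma bethe_hasDerivAt_one_div (a x₀ : ℂ) (h : a - x₀ ≠ 0) :
    HasDerivAt (fun x : ℂ => 1 / (x - x₀)) (-((a - x₀) ^ 2)⁻¹) a := by
  have h1 : (fun x : ℂ => 1 / (x - x₀)) = fun x => (x - x₀)⁻¹ := by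
    funext x; rw [one_div]
  rw [h1]
  have := ((hasDerivAt_id' (x := a)).sub_const x₀).fun_inv h
  refine this.congr_deriv ?_
  rw [neg_div, one_div]

/-- Under the kernel hypotheses — if for every `x₀ ∉ S = {s 1,…,s m}`
there exist an open set `U ⊇ S` and a holomorphic `K : U → ℂ` with
`ħ ∂ₓK(x) = (2ω(x) − V′(x)) K(x) − G(x₀,x)` on `U \ (S ∪ {x₀})`, where
`ω(x) = ħ ∑ i, 1/(x − s i)` and
`G(x₀,x) = 1/(x − x₀) + 2 ∑ i j, A i j /((x − s i)(x₀ − s j)²)` — then the points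
`s i` satisfy the Bethe equations `V′(s i) = 2ħ ∑_{j ≠ i} 1/(s i − s j)`. -/
theorem kernel_existence_implies_bethe (m : ℕ) (hbar : ℂ) (hhbar : hbar ≠ 0)
    (V : Polynomial ℂ) (s : Fin m → ℂ) (hs : Function.Injective s)
    (A : Matrix (Fin m) (Fin m) ℂ)
    (hker : ∀ x₀ : ℂ, (∀ i, x₀ ≠ s i) →
      ∃ (U : Set ℂ) (K : ℂ → ℂ), IsOpen U ∧ (∀ i, s i ∈ U) ∧
        DifferentiableOn ℂ K U ∧
        ∀ x ∈ U, (∀ i, x ≠ s i) → x ≠ x₀ →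
          hbar * deriv K x
            = (2 * (hbar * ∑ i, 1 / (x - s i)) - V.derivative.eval x) * K x
              - (1 / (x - x₀) + 2 * ∑ i, ∑ j, A i j / ((x - s i) * (x₀ - s j) ^ 2))) :
    ∀ i, V.derivative.eval (s i) = 2 * hbar * ∑ j ∈ univ.erase i, 1 / (s i - s j) := by
  classical
  intro i
  open Filter in
  set a : ℂ := s i with ha
  have hanes : ∀ j ∈ univ.erase i, a ≠ s j := by
    intro j hj h
    exact (Finset.mem_erase.1 hj).1 (hs h.symm)
  set ρ0 : ℂ := 2 * hbar * ∑ j ∈ univ.erase i, 1 / (a - s j) - V.derivative.eval a with hρ0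
  set R : ℂ → ℂ := fun x => 2 * hbar * ∑ j ∈ univ.erase i, 1 / (x - s j)
      - V.derivative.eval x with hR
  set c : ℂ → ℂ := fun x₀ => 2 * ∑ j, A i j / (x₀ - s j) ^ 2 with hc
  set η0 : ℂ → ℂ := fun x₀ => 1 / (a - x₀)
      + 2 * ∑ k ∈ univ.erase i, ∑ j, A k j / ((a - s k) * (x₀ - s j) ^ 2) with hη0
  set η1 : ℂ → ℂ := fun x₀ => -((a - x₀) ^ 2)⁻¹
      - 2 * ∑ k ∈ univ.erase i, ∑ j,
          A k j / ((a - s k) ^ 2 * (x₀ - s j) ^ 2) with hη1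
  -- differentiability of `R` at points avoiding the poles
  have hRdiff : ∀ x : ℂ, (∀ j ∈ univ.erase i, x ≠ s j) → DifferentiableAt ℂ R x := by
    intro x hx
    apply DifferentiableAt.sub
    · apply DifferentiableAt.const_mul
      apply DifferentiableAt.fun_sum
      intro j hj
      exact (differentiableAt_const 1).div (differentiableAt_fun_id.sub (differentiableAt_const _))
        (sub_ne_zero.2 (hx j hj))
    · exact V.derivative.differentiableAt
  obtain ⟨ρ1, hρ1⟩ : ∃ ρ1 : ℂ, HasDerivAt R ρ1 a :=
    ⟨deriv R a, (hRdiff a hanes).hasDerivAt⟩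
  -- KEY STEP: the constraint for every admissible x₀
  have key : ∀ x₀ : ℂ, (∀ j, x₀ ≠ s j) →
      ρ1 * (c x₀) / (2 * hbar)
        + ρ0 * ((η0 x₀ - ρ0 * (c x₀) / (2 * hbar)) / hbar) = η1 x₀ := by
    intro x₀ hx₀
    obtain ⟨U, K, hUopen, hsU, hKd, hODE⟩ := hker x₀ hx₀
    have hax₀ : a ≠ x₀ := fun h => hx₀ i (h.symm)
    -- the auxiliary functions
    set hf : ℂ → ℂ := fun x => 1 / (x - x₀)
        + 2 * ∑ k ∈ univ.erase i, ∑ j, A k j / ((x - s k) * (x₀ - s j) ^ 2) with hh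
    set N : ℂ → ℂ := fun x => hbar * deriv K x - R x * K x + hf x with hN
    -- the working open set
    set W : Set ℂ := U ∩ ((⋂ j ∈ univ.erase i, {s j}ᶜ) ∩ {x₀}ᶜ) with hW
    have hWopen : IsOpen W :=
      hUopen.inter ((isOpen_biInter_finset fun j _ => isOpen_compl_singleton).inter
        isOpen_compl_singleton)
    have hWmem : ∀ x ∈ W, x ∈ U ∧ (∀ j ∈ univ.erase i, x ≠ s j) ∧ x ≠ x₀ := by
      intro x hx
      refine ⟨hx.1, fun j hj => ?_, ?_⟩
      · have := hx.2.1
        simp only [Set.mem_iInter, Set.mem_compl_iff, Set.mem_singleton_iff] at this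
        exact this j hj
      · have := hx.2.2
        simpa using this
    have haW : a ∈ W := by
      refine ⟨hsU i, ?_, ?_⟩
      · simp only [Set.mem_iInter, Set.mem_compl_iff, Set.mem_singleton_iff]
        exact hanes
      · simpa using hax₀
    -- analyticity of K and its derivative
    have hKan : AnalyticOnNhd ℂ K U := hKd.analyticOnNhd hUopen
    have hK'an : AnalyticOnNhd ℂ (deriv K) U := hKan.deriv
    -- differentiability of h on W
    have hhdiff : ∀ x ∈ W, DifferentiableAt ℂ hf x := by
      intro x hx
      obtain ⟨hxU, hxs, hxx₀⟩ := hWmem x hx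
      apply DifferentiableAt.add
      · exact (differentiableAt_const 1).div
          (differentiableAt_fun_id.sub (differentiableAt_const _)) (sub_ne_zero.2 hxx₀)
      · apply DifferentiableAt.const_mul
        apply DifferentiableAt.fun_sum
        intro k hk
        apply DifferentiableAt.fun_sum
        intro j _
        exact (differentiableAt_const _).div
          ((differentiableAt_fun_id.sub (differentiableAt_const _)).mul_const _)
          (mul_ne_zero (sub_ne_zero.2 (hxs k hk)) (pow_ne_zero 2 (sub_ne_zero.2 (hx₀ j))))
    -- differentiability of N on W
    have hNdiff : ∀ x ∈ W, DifferentiableAt ℂ N x := by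
      intro x hx
      obtain ⟨hxU, hxs, hxx₀⟩ := hWmem x hx
      exact (((hK'an x hxU).differentiableAt.const_mul hbar).sub
        ((hRdiff x hxs).mul (hKan x hxU).differentiableAt)).add (hhdiff x hx)
    have hNdiffOn : DifferentiableOn ℂ N W := fun x hx => (hNdiff x hx).differentiableWithinAt
    have hNan : AnalyticOnNhd ℂ N W := hNdiffOn.analyticOnNhd hWopen
    -- the fundamental local identity away from a
    have hPW : ∀ x ∈ W, x ≠ a → 2 * hbar * K x - c x₀ = (x - a) * N x := by
      intro x hx hxa
      obtain ⟨hxU, hxs, hxx₀⟩ := hWmem x hx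
      have hxall : ∀ j, x ≠ s j := by
        intro j
        by_cases hj : j = i
        · rw [hj]; exact hxa
        · exact hxs j (Finset.mem_erase.2 ⟨hj, Finset.mem_univ j⟩)
      have hODEx := hODE x hxU hxall hxx₀
      have hxa' : x - a ≠ 0 := sub_ne_zero.2 hxa
      have hu : (x - a) * (x - a)⁻¹ = 1 := mul_inv_cancel₀ hxa'
      have hsum1 : ∑ j, 1 / (x - s j)
          = 1 / (x - a) + ∑ j ∈ univ.erase i, 1 / (x - s j) :=
        (Finset.add_sum_erase _ _ (Finset.mem_univ i)).symm
      have hsum2 : ∑ k, ∑ j, A k j / ((x - s k) * (x₀ - s j) ^ 2)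
          = (∑ j, A i j / (x₀ - s j) ^ 2) * (x - a)⁻¹
            + ∑ k ∈ univ.erase i, ∑ j, A k j / ((x - s k) * (x₀ - s j) ^ 2) := by
        rw [← Finset.add_sum_erase _ _ (Finset.mem_univ i)]
        congr 1
        rw [Finset.sum_mul]
        refine Finset.sum_congr rfl fun j _ => by
          rw [div_mul_eq_div_div_swap]
          ring
      rw [hsum1, hsum2] at hODEx
      simp only [hN, hR, hh, hc]
      simp only [one_div] at hODEx ⊢
      linear_combination (-(x - a)) * hODEx - (2 * hbar * (K x) - 2 * ∑ j, A i j / (x₀ - s j) ^ 2) * hu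
    -- extend the identity to a by continuity
    have hNconta : ContinuousAt N a := (hNdiff a haW).continuousAt
    have hKconta : ContinuousAt K a := (hKan a (hsU i)).differentiableAt.continuousAt
    have hPa : 2 * hbar * K a - c x₀ = 0 := by
      set g : ℂ → ℂ := fun x => 2 * hbar * K x - c x₀ - (x - a) * N x with hg
      have hgcont : ContinuousAt g a := by
        apply ContinuousAt.sub
        · exact (hKconta.const_mul _).sub continuousAt_const
        · exact ((continuousAt_id.sub continuousAt_const).mul hNconta)
      have hg0 : g =ᶠ[nhdsWithin a {a}ᶜ] 0 := by
        have hWn : W ∈ nhdsWithin a {a}ᶜ :=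
          nhdsWithin_le_nhds (hWopen.mem_nhds haW)
        filter_upwards [hWn, self_mem_nhdsWithin] with x hxW hxa
        have := hPW x hxW hxa
        simp only [hg, Pi.zero_apply]
        rw [this]
        ring
      have h1 : Filter.Tendsto g (nhdsWithin a {a}ᶜ) (nhds (g a)) :=
        (hgcont.continuousWithinAt).tendsto
      have h2 : Filter.Tendsto g (nhdsWithin a {a}ᶜ) (nhds 0) := by
        apply Filter.Tendsto.congr' hg0.symm
        exact tendsto_const_nhds
      have := tendsto_nhds_unique h1 h2
      have : 2 * hbar * K a - c x₀ - (a - a) * N a = 0 := this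
      simpa using this
    -- the identity as an eventual equality of functions near a
    have hPev : (fun x => 2 * hbar * K x - c x₀) =ᶠ[nhds a] (fun x => (x - a) * N x) := by
      filter_upwards [hWopen.mem_nhds haW] with x hxW
      by_cases hxa : x = a
      · subst hxa
        rw [hPa]
        simp
      · exact hPW x hxW hxa
    have E0 : 2 * hbar * K a = c x₀ := by linear_combination hPa
    -- first derivative identity near a
    have hQ : (fun x => 2 * hbar * deriv K x)
        =ᶠ[nhds a] (fun x => N x + (x - a) * deriv N x) := by
      filter_upwards [hPev.deriv, hWopen.mem_nhds haW] with x hx hxW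
      obtain ⟨hxU, -, -⟩ := hWmem x hxW
      have hL : deriv (fun y => 2 * hbar * K y - c x₀) x = 2 * hbar * deriv K x :=
        ((((hKan x hxU).differentiableAt.hasDerivAt).const_mul (2 * hbar)).sub_const (c x₀)).deriv
      have hR2 : deriv (fun y => (y - a) * N y) x = N x + (x - a) * deriv N x := by
        have := (((hasDerivAt_id' (x := x)).sub_const a).fun_mul ((hNdiff x hxW).hasDerivAt)).deriv
        rw [this]; ring
      rw [← hL, ← hR2]
      exact hx
    have E1 : 2 * hbar * deriv K a = N a := by
      have := hQ.eq_of_nhds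
      simpa using this
    -- second derivative identity at a
    have hNa : HasDerivAt N (deriv N a) a := (hNdiff a haW).hasDerivAt
    have hN'a : DifferentiableAt ℂ (deriv N) a := ((hNan.deriv) a haW).differentiableAt
    have hK''a : HasDerivAt (deriv K) (deriv (deriv K) a) a :=
      (hK'an a (hsU i)).differentiableAt.hasDerivAt
    have E2 : 2 * hbar * deriv (deriv K) a = 2 * deriv N a := by
      have hL : deriv (fun x => 2 * hbar * deriv K x) a = 2 * hbar * deriv (deriv K) a :=
        (hK''a.const_mul (2 * hbar)).deriv
      have hR2 : deriv (fun x => N x + (x - a) * deriv N x) a = 2 * deriv N a := by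
        have hmul : HasDerivAt (fun x => (x - a) * deriv N x)
            (1 * deriv N a + (a - a) * deriv (deriv N) a) a :=
          ((hasDerivAt_id' (x := a)).sub_const a).mul hN'a.hasDerivAt
        rw [(hNa.fun_add hmul).deriv]
        ring
      rw [← hL, ← hR2]
      exact hQ.deriv_eq
    -- explicit derivative of hf at a
    have hKa : HasDerivAt K (deriv K a) a := (hKan a (hsU i)).differentiableAt.hasDerivAt
    have hha : HasDerivAt hf (η1 x₀) a := by
      have hterm1 := bethe_hasDerivAt_one_div a x₀ (sub_ne_zero.2 hax₀)
      have hterm2 : HasDerivAt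
          (fun x => ∑ k ∈ univ.erase i, ∑ j, A k j / ((x - s k) * (x₀ - s j) ^ 2))
          (∑ k ∈ univ.erase i, ∑ j, -(A k j / ((a - s k) ^ 2 * (x₀ - s j) ^ 2))) a := by
        apply HasDerivAt.fun_sum
        intro k hk
        apply HasDerivAt.fun_sum
        intro j _
        exact bethe_hasDerivAt_div a (s k) ((x₀ - s j) ^ 2) (A k j)
          (sub_ne_zero.2 (hanes k hk)) (pow_ne_zero 2 (sub_ne_zero.2 (hx₀ j)))
      have hsumval := hterm1.fun_add (hterm2.const_mul 2)
      refine hsumval.congr_deriv (Eq.symm ?_)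
      simp only [hη1, Finset.sum_neg_distrib]
      ring
    have hNa' : HasDerivAt N
        (hbar * deriv (deriv K) a - (ρ1 * K a + R a * deriv K a) + η1 x₀) a :=
      ((hK''a.const_mul hbar).sub (hρ1.mul hKa)).add hha
    have hNval : deriv N a
        = hbar * deriv (deriv K) a - (ρ1 * K a + R a * deriv K a) + η1 x₀ := hNa'.deriv
    have hRa : R a = ρ0 := by rw [hR, hρ0]
    have hNaval : N a = hbar * deriv K a - ρ0 * K a + η0 x₀ := by
      simp only [hN, hR, hh, hρ0, hη0]
    have e2 : ρ1 * K a + ρ0 * deriv K a = η1 x₀ := by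
      rw [hNval, hRa] at E2
      linear_combination (1 / 2 : ℂ) * E2
    have e1 : hbar * deriv K a = η0 x₀ - ρ0 * K a := by
      rw [hNaval] at E1
      linear_combination E1
    have hKaval : K a = c x₀ / (2 * hbar) := by
      rw [eq_div_iff (mul_ne_zero two_ne_zero hhbar)]
      linear_combination E0
    have hK'val : deriv K a = (η0 x₀ - ρ0 * (c x₀) / (2 * hbar)) / hbar := by
      rw [eq_div_iff hhbar]
      linear_combination e1 - ρ0 * hKaval
    rw [hKaval, hK'val] at e2
    linear_combination e2
  -- LIMIT STEP: let x₀ → ∞ along the natural numbers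
  open Filter in
  have hzero : ρ0 = 0 := by
    have hBig : ∀ᶠ n : ℕ in atTop, ∀ j, (n : ℂ) ≠ s j := by
      rw [Filter.eventually_all]
      intro j
      have h1 : ∀ᶠ n : ℕ in atTop, ‖s j‖ < (n : ℝ) :=
        tendsto_natCast_atTop_atTop.eventually_gt_atTop ‖s j‖
      filter_upwards [h1] with n hn h
      rw [← h] at hn
      simp at hn
    have hane : ∀ᶠ n : ℕ in atTop, a - (n : ℂ) ≠ 0 := by
      have h1 : ∀ᶠ n : ℕ in atTop, ‖a‖ < (n : ℝ) :=
        tendsto_natCast_atTop_atTop.eventually_gt_atTop ‖a‖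
      filter_upwards [h1] with n hn h
      rw [sub_eq_zero] at h
      rw [h] at hn
      simp at hn
    have Tc : Tendsto (fun n : ℕ => (a - (n : ℂ)) * c n) atTop (nhds 0) := by
      have heq : ∀ n : ℕ, (a - (n : ℂ)) * c n
          = ∑ j, (A i j * 2) * ((a - (n : ℂ)) * (((n : ℂ) - s j) ^ 2)⁻¹) := by
        intro n
        simp only [hc]
        rw [← mul_assoc, Finset.mul_sum]
        refine Finset.sum_congr rfl fun j _ => by ring
      simp only [heq]
      have := tendsto_finset_sum (univ : Finset (Fin m))
        (fun j (_ : j ∈ univ) => (bethe_lim2 a (s j)).const_mul (A i j * 2))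
      simpa using this
    have Tsum2 : ∀ (w : Fin m → Fin m → ℂ), Tendsto (fun n : ℕ =>
        ∑ k ∈ univ.erase i, ∑ j, (w k j) * ((a - (n : ℂ)) * (((n : ℂ) - s j) ^ 2)⁻¹))
        atTop (nhds 0) := by
      intro w
      have := tendsto_finset_sum (univ.erase i) (fun k (_ : k ∈ univ.erase i) =>
        tendsto_finset_sum (univ : Finset (Fin m)) (fun j (_ : j ∈ univ) =>
          (bethe_lim2 a (s j)).const_mul (w k j)))
      simpa using this
    have Tη0 : Tendsto (fun n : ℕ => (a - (n : ℂ)) * η0 n) atTop (nhds 1) := by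
      have heq : ∀ᶠ n : ℕ in atTop, (a - (n : ℂ)) * η0 n
          = 1 + ∑ k ∈ univ.erase i, ∑ j,
              (2 * A k j / (a - s k)) * ((a - (n : ℂ)) * (((n : ℂ) - s j) ^ 2)⁻¹) := by
        filter_upwards [hane] with n hn
        simp only [hη0]
        rw [mul_add, mul_one_div, div_self hn, ← mul_assoc, Finset.mul_sum]
        congr 1
        refine Finset.sum_congr rfl fun k _ => by
          rw [Finset.mul_sum]
          refine Finset.sum_congr rfl fun j _ => by
            rw [div_mul_eq_div_div_swap]
            ring
      apply Tendsto.congr' (heq.mono fun n h => h.symm)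
      have := (tendsto_const_nhds (x := (1 : ℂ)) (f := atTop (α := ℕ))).add
        (Tsum2 (fun k j => 2 * A k j / (a - s k)))
      simpa using this
    have Tη1 : Tendsto (fun n : ℕ => (a - (n : ℂ)) * η1 n) atTop (nhds 0) := by
      have heq : ∀ n : ℕ, (a - (n : ℂ)) * η1 n
          = -(a - (n : ℂ))⁻¹ - ∑ k ∈ univ.erase i, ∑ j,
              (2 * A k j / (a - s k) ^ 2) * ((a - (n : ℂ)) * (((n : ℂ) - s j) ^ 2)⁻¹) := by
        intro n
        simp only [hη1]
        rw [mul_sub]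
        congr 1
        · by_cases h : a - (n : ℂ) = 0
          · simp [h]
          · field_simp
        · rw [← mul_assoc, Finset.mul_sum]
          refine Finset.sum_congr rfl fun k _ => by
            rw [Finset.mul_sum]
            refine Finset.sum_congr rfl fun j _ => by
              rw [div_mul_eq_div_div_swap]
              ring
      simp only [heq]
      have hinv : Tendsto (fun n : ℕ => -(a - (n : ℂ))⁻¹) atTop (nhds 0) := by
        have hswap : ∀ n : ℕ, -(a - (n : ℂ))⁻¹ = ((n : ℂ) - a)⁻¹ := by
          intro n; rw [← inv_neg, neg_sub]
        simp only [hswap]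
        exact bethe_lim1 a
      have := hinv.sub (Tsum2 (fun k j => 2 * A k j / (a - s k) ^ 2))
      simpa using this
    have TΦ : Tendsto (fun n : ℕ =>
        ρ1 * ((a - (n : ℂ)) * c n) / (2 * hbar)
          + ρ0 * (((a - (n : ℂ)) * η0 n - ρ0 * ((a - (n : ℂ)) * c n) / (2 * hbar)) / hbar)
          - (a - (n : ℂ)) * η1 n) atTop (nhds (ρ0 / hbar)) := by
      have := ((Tc.const_mul ρ1).div_const (2 * hbar)).add
        ((((Tη0.sub ((Tc.const_mul ρ0).div_const (2 * hbar)))).div_const hbar).const_mul ρ0)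
        |>.sub Tη1
      have h2 : ρ1 * (0 : ℂ) / (2 * hbar) + ρ0 * (((1 : ℂ) - ρ0 * 0 / (2 * hbar)) / hbar) - 0
          = ρ0 / hbar := by
        field_simp
        ring
      rw [h2] at this
      exact this
    have hΦ0 : ∀ᶠ n : ℕ in atTop, (ρ1 * ((a - (n : ℂ)) * c n) / (2 * hbar)
          + ρ0 * (((a - (n : ℂ)) * η0 n - ρ0 * ((a - (n : ℂ)) * c n) / (2 * hbar)) / hbar)
          - (a - (n : ℂ)) * η1 n) = 0 := by
      filter_upwards [hBig] with n hn
      have hk := key (n : ℂ) hn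
      have hfac : ρ1 * ((a - (n : ℂ)) * c n) / (2 * hbar)
          + ρ0 * (((a - (n : ℂ)) * η0 n - ρ0 * ((a - (n : ℂ)) * c n) / (2 * hbar)) / hbar)
          - (a - (n : ℂ)) * η1 n
          = (a - (n : ℂ)) * (ρ1 * (c n) / (2 * hbar)
            + ρ0 * ((η0 n - ρ0 * (c n) / (2 * hbar)) / hbar) - η1 n) := by ring
      rw [hfac, hk]
      ring
    have hu := tendsto_nhds_unique (TΦ.congr' hΦ0) tendsto_const_nhds
    have hρ : ρ0 / hbar = 0 := hu
    field_simp at hρ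
    simpa using hρ
  rw [hρ0, sub_eq_zero] at hzero
  exact hzero.symm
end

section
/- Let V, W ∈ ℂ[X], ħ a nonzero complex number, I ⊆ ℝ an interval, and s : I → ℂ^m a differentiable map whose coordinates s_1(t),…,s_m(t) are pairwise distinct for every t ∈ I, satisfying for all t ∈ I and all i the deformed Bethe equations V′(s_i(t)) + t·W′(s_i(t)) = 2ħ ∑_{j≠i} 1/(s_i(t) − s_j(t)). Then for all t ∈ I and all i: W′(s_i(t)) = −ħ ∑_{j=1}^m T_{ij}(t) · s_j′(t), where T(t) is the Hessian matrix of the potential V + tW at the points s(t): T_{ii}(t) = (1/ħ)(V″ + tW″)(s_i(t)) + 2∑_{j≠i} 1/(s_i(t) − s_j(t))², T_{ij}(t) = −2/(s_i(t) − s_j(t))² for i ≠ j. -/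
open Finset Polynomial

/-- The Hessian matrix `T` of the paper: `T i i = (1/ħ) vpp i + 2 ∑_{k≠i} 1/(σ i − σ k)²`,
`T i j = −2/(σ i − σ j)²` for `i ≠ j`; here `vpp i` is the second derivative of the
potential evaluated at `σ i`. -/
noncomputable def hessianT (m : ℕ) (hbar : ℂ) (vpp : Fin m → ℂ) (σ : Fin m → ℂ) :
    Matrix (Fin m) (Fin m) ℂ :=
  Matrix.of fun i j =>
    if i = j then (1 / hbar) * vpp i + 2 * ∑ k ∈ univ.erase i, 1 / (σ i - σ k) ^ 2
    else -2 / (σ i - σ j) ^ 2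

/-- If `s(t)` is a differentiable family of pairwise distinct points
solving the deformed Bethe equations for the potential `V + t W`, then
`W′(s i (t)) = − ħ ∑ j, T i j (t) · s j ′(t)`, where `T(t)` is the Hessian matrix of
`V + t W` at `s(t)`. -/
theorem deformed_bethe_roots_velocity (m : ℕ) (hbar : ℂ) (hhbar : hbar ≠ 0)
    (V W : Polynomial ℂ) (I : Set ℝ) (hI : I.OrdConnected) (hInontriv : I.Nontrivial)
    (s s' : ℝ → Fin m → ℂ)
    (hdiff : ∀ t ∈ I, ∀ i, HasDerivWithinAt (fun τ => s τ i) (s' t i) I t)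
    (hdist : ∀ t ∈ I, ∀ i j, i ≠ j → s t i ≠ s t j)
    (hBethe : ∀ t ∈ I, ∀ i,
      V.derivative.eval (s t i) + (t : ℂ) * W.derivative.eval (s t i)
        = 2 * hbar * ∑ j ∈ univ.erase i, 1 / (s t i - s t j)) :
    ∀ t ∈ I, ∀ i,
      W.derivative.eval (s t i)
        = -hbar * ∑ j, hessianT m hbar
            (fun k => V.derivative.derivative.eval (s t k)
              + (t : ℂ) * W.derivative.derivative.eval (s t k)) (s t) i j * s' t j := by
  intro t ht i
  -- unique differentiability of `I` at `t`
  have hconv : Convex ℝ I := hI.convex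
  have hu : UniqueDiffWithinAt ℝ I t := by
    obtain ⟨a, ha, b, hb, hab⟩ := hInontriv
    rcases lt_or_gt_of_ne hab with h | h
    · refine uniqueDiffWithinAt_convex hconv ⟨(a + b) / 2, ?_⟩ (subset_closure ht)
      exact interior_mono (fun x hx => hI.out ha hb ⟨le_of_lt hx.1, le_of_lt hx.2⟩)
        (by rw [interior_Ioo]; exact ⟨by linarith, by linarith⟩ : (a + b) / 2 ∈ interior (Set.Ioo a b))
    · refine uniqueDiffWithinAt_convex hconv ⟨(a + b) / 2, ?_⟩ (subset_closure ht)
      exact interior_mono (fun x hx => hI.out hb ha ⟨le_of_lt hx.1, le_of_lt hx.2⟩)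
        (by rw [interior_Ioo]; exact ⟨by linarith, by linarith⟩ : (a + b) / 2 ∈ interior (Set.Ioo b a))
  -- the function encoding the Bethe equation
  set g : ℝ → ℂ := fun τ =>
    V.derivative.eval (s τ i) + (τ : ℂ) * W.derivative.eval (s τ i)
      - 2 * hbar * ∑ j ∈ univ.erase i, (s τ i - s τ j)⁻¹ with hg
  have hg0 : ∀ τ ∈ I, g τ = 0 := by
    intro τ hτ
    have := hBethe τ hτ i
    simp only [one_div] at this
    simp [hg, this]
  -- explicit derivative of `g` within `I` at `t`
  have h1 : HasDerivWithinAt (fun τ => V.derivative.eval (s τ i))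
      (V.derivative.derivative.eval (s t i) * s' t i) I t :=
    by have := (V.derivative.hasDerivAt (s t i)).comp_hasDerivWithinAt t (hdiff t ht i); exact this
  have h3 : HasDerivWithinAt (fun τ => W.derivative.eval (s τ i))
      (W.derivative.derivative.eval (s t i) * s' t i) I t :=
    by have := (W.derivative.hasDerivAt (s t i)).comp_hasDerivWithinAt t (hdiff t ht i); exact this
  have h2 : HasDerivWithinAt (fun τ : ℝ => (τ : ℂ)) 1 I t :=
    ((hasDerivAt_id t).ofReal_comp).hasDerivWithinAt
  have hsum : HasDerivWithinAt (fun τ => ∑ j ∈ univ.erase i, (s τ i - s τ j)⁻¹)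
      (∑ j ∈ univ.erase i, -(((s t i - s t j) ^ 2)⁻¹) * (s' t i - s' t j)) I t := by
    refine HasDerivWithinAt.fun_sum (fun j hj => ?_)
    have hij : i ≠ j := (Finset.ne_of_mem_erase hj).symm
    exact (hasDerivAt_inv (sub_ne_zero.mpr (hdist t ht i j hij))).comp_hasDerivWithinAt t
      ((hdiff t ht i).sub (hdiff t ht j))
  have hgd : HasDerivWithinAt g
      (V.derivative.derivative.eval (s t i) * s' t i
        + (1 * W.derivative.eval (s t i)
            + (t : ℂ) * (W.derivative.derivative.eval (s t i) * s' t i))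
        - 2 * hbar * ∑ j ∈ univ.erase i, -(((s t i - s t j) ^ 2)⁻¹) * (s' t i - s' t j)) I t :=
    (h1.add (h2.mul h3)).sub (hsum.const_mul (2 * hbar))
  have hzero : HasDerivWithinAt g 0 I t :=
    (hasDerivWithinAt_const t I (0 : ℂ)).congr hg0 (hg0 t ht)
  have h0 : V.derivative.derivative.eval (s t i) * s' t i
        + (1 * W.derivative.eval (s t i)
            + (t : ℂ) * (W.derivative.derivative.eval (s t i) * s' t i))
        - 2 * hbar * ∑ j ∈ univ.erase i, -(((s t i - s t j) ^ 2)⁻¹) * (s' t i - s' t j) = 0 := by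
    rw [← hgd.derivWithin hu, hzero.derivWithin hu]
  -- rewrite the target sum
  rw [← Finset.add_sum_erase _ _ (Finset.mem_univ i)]
  have hrest : ∀ j ∈ univ.erase i,
      hessianT m hbar (fun k => V.derivative.derivative.eval (s t k)
        + (t : ℂ) * W.derivative.derivative.eval (s t k)) (s t) i j * s' t j
      = -2 / (s t i - s t j) ^ 2 * s' t j := by
    intro j hj
    have hij : i ≠ j := (Finset.ne_of_mem_erase hj).symm
    simp [hessianT, hij]
  rw [Finset.sum_congr rfl hrest]
  simp only [hessianT, Matrix.of_apply, if_pos rfl, if_true]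
  set A : ℂ := ∑ k ∈ univ.erase i, 1 / (s t i - s t k) ^ 2 with hA
  set B : ℂ := ∑ j ∈ univ.erase i, -2 / (s t i - s t j) ^ 2 * s' t j with hB
  have hC : ∑ j ∈ univ.erase i, -(((s t i - s t j) ^ 2)⁻¹) * (s' t i - s' t j)
      = -s' t i * A + (-1 / 2) * B := by
    rw [hA, hB, Finset.mul_sum, Finset.mul_sum, ← Finset.sum_add_distrib]
    refine Finset.sum_congr rfl (fun j hj => ?_)
    ring
  rw [hC] at h0
  field_simp at h0 ⊢
  linear_combination h0
end

section
/- Let V ∈ ℂ[X], let I ⊆ ℝ \ {0} be an interval, and let s : I → ℂ^m be a differentiable map whose coordinates s_1(ħ),…,s_m(ħ) are pairwise distinct for every ħ ∈ I, satisfying for all ħ ∈ I and all i the Bethe equations V′(s_i(ħ)) = 2ħ ∑_{j≠i} 1/(s_i(ħ) − s_j(ħ)). Then for all ħ ∈ I and all i: V′(s_i(ħ)) = ħ² ∑_{j=1}^m T_{ij}(ħ) · s_j′(ħ), where T(ħ) is the Hessian matrix at the points s(ħ): T_{ii}(ħ) = (1/ħ)V″(s_i(ħ)) + 2∑_{j≠i}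 1/(s_i(ħ) − s_j(ħ))², T_{ij}(ħ) = −2/(s_i(ħ) − s_j(ħ))² for i ≠ j. -/
open Finset Polynomial

/-- If `s(ħ)` is a differentiable family of pairwise distinct points
solving the Bethe equations as `ħ` varies in an interval `I ⊆ ℝ \ {0}`, then
`V′(s i (ħ)) = ħ² ∑ j, T i j (ħ) · s j ′(ħ)`, where `T(ħ)` is the Hessian matrix at
`s(ħ)`. -/
theorem bethe_roots_hbar_velocity (m : ℕ) (V : Polynomial ℂ)
    (I : Set ℝ) (hI : I.OrdConnected) (hInontriv : I.Nontrivial) (hI0 : (0 : ℝ) ∉ I)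
    (s s' : ℝ → Fin m → ℂ)
    (hdiff : ∀ h ∈ I, ∀ i, HasDerivWithinAt (fun τ => s τ i) (s' h i) I h)
    (hdist : ∀ h ∈ I, ∀ i j, i ≠ j → s h i ≠ s h j)
    (hBethe : ∀ h ∈ I, ∀ i,
      V.derivative.eval (s h i)
        = 2 * (h : ℂ) * ∑ j ∈ univ.erase i, 1 / (s h i - s h j)) :
    ∀ h ∈ I, ∀ i,
      V.derivative.eval (s h i)
        = (h : ℂ) ^ 2 * ∑ j, hessianT m (h : ℂ)
            (fun k => V.derivative.derivative.eval (s h k)) (s h) i j * s' h j := by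
  intro h hh i
  have hhne : (h : ℂ) ≠ 0 := by
    intro hc
    exact hI0 (by rwa [show h = 0 by exact_mod_cast hc] at hh)
  -- unique differentiability
  have hconv : Convex ℝ I := convex_iff_ordConnected.mpr hI
  obtain ⟨a, haI, b, hbI, hab⟩ := hInontriv
  have hud : UniqueDiffWithinAt ℝ I h := by
    apply uniqueDiffWithinAt_convex hconv _ (subset_closure hh)
    rcases hab.lt_or_gt with hl | hl
    · exact ⟨(a+b)/2, (isOpen_Ioo.subset_interior_iff.mpr
        ((Set.Ioo_subset_Icc_self).trans (hI.out haI hbI))) ⟨by linarith, by linarith⟩⟩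
    · exact ⟨(a+b)/2, (isOpen_Ioo.subset_interior_iff.mpr
        ((Set.Ioo_subset_Icc_self).trans (hI.out hbI haI))) ⟨by linarith, by linarith⟩⟩
  -- derivative of the sum
  have hS : HasDerivWithinAt (fun τ => ∑ j ∈ univ.erase i, 1 / (s τ i - s τ j))
      (∑ j ∈ univ.erase i, -(s' h i - s' h j) / (s h i - s h j) ^ 2) I h := by
    apply HasDerivWithinAt.fun_sum
    intro j hj
    have hne : s h i - s h j ≠ 0 :=
      sub_ne_zero.mpr (hdist h hh i j (Finset.ne_of_mem_erase hj).symm)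
    have hsub : HasDerivWithinAt (fun τ => s τ i - s τ j) (s' h i - s' h j) I h :=
      (hdiff h hh i).sub (hdiff h hh j)
    have := (hasDerivWithinAt_const h I (1:ℂ)).fun_div hsub hne
    exact this.congr_deriv (by ring)
  -- derivative of V'(s i)
  have hP : HasDerivWithinAt (fun τ => V.derivative.eval (s τ i))
      (V.derivative.derivative.eval (s h i) * s' h i) I h :=
    by have h2 := HasDerivAt.comp_hasDerivWithinAt h (V.derivative.hasDerivAt (s h i)) (hdiff h hh i); exact h2
  -- derivative of 2τ
  have hτ : HasDerivWithinAt (fun τ : ℝ => 2 * (τ : ℂ)) 2 I h := by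
    simpa using (Complex.ofRealCLM.hasDerivWithinAt (s := I) (x := h)).const_mul (2:ℂ)
  have hprod := hτ.mul hS
  have hfD := hP.sub hprod
  have hf0 : HasDerivWithinAt (fun τ => V.derivative.eval (s τ i)
      - 2 * (τ:ℂ) * ∑ j ∈ univ.erase i, 1 / (s τ i - s τ j)) 0 I h := by
    apply (hasDerivWithinAt_const h I (0:ℂ)).congr _ (by rw [hBethe h hh i]; ring)
    intro τ hτI
    rw [hBethe τ hτI i]; ring
  have key := (hfD.derivWithin hud).symm.trans (hf0.derivWithin hud)
  -- abbreviations
  set A := ∑ j ∈ univ.erase i, 1 / (s h i - s h j) with hA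
  set S1 := ∑ j ∈ univ.erase i, 1 / (s h i - s h j) ^ 2 with hS1
  set S2 := ∑ j ∈ univ.erase i, s' h j / (s h i - s h j) ^ 2 with hS2
  have hrw : ∑ j ∈ univ.erase i, -(s' h i - s' h j) / (s h i - s h j) ^ 2
      = -(s' h i) * S1 + S2 := by
    rw [hS1, hS2, Finset.mul_sum, ← Finset.sum_add_distrib]
    exact Finset.sum_congr rfl fun j hj => by ring
  rw [hrw] at key
  have hgoal2 : ∑ j, hessianT m (h : ℂ)
      (fun k => V.derivative.derivative.eval (s h k)) (s h) i j * s' h j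
      = ((1/(h:ℂ)) * V.derivative.derivative.eval (s h i) + 2 * S1) * s' h i + (-2) * S2 := by
    rw [← Finset.add_sum_erase _ _ (Finset.mem_univ i)]
    congr 1
    · simp [hessianT, hS1]
    · rw [hS2, Finset.mul_sum]
      refine Finset.sum_congr rfl fun j hj => ?_
      have : i ≠ j := (Finset.ne_of_mem_erase hj).symm
      simp only [hessianT, Matrix.of_apply, if_neg this]
      ring
  rw [hgoal2, hBethe h hh i]
  have hsq : ((h:ℂ))^2 * (1/(h:ℂ)) = (h:ℂ) := by field_simp [sq]
  linear_combination -(h:ℂ) * key - (eval (s h i) (derivative (derivative V)) * s' h i) * hsq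
end

section
/- Let V, W ∈ ℝ[X], ħ a nonzero real number, I ⊆ ℝ an interval, and s : I → ℝ^m a differentiable map whose coordinates are pairwise distinct for every t ∈ I and satisfy, for all t ∈ I and all i, the deformed Bethe equations V′(s_i(t)) + t·W′(s_i(t)) = 2ħ ∑_{j≠i} 1/(s_i(t) − s_j(t)). Define F⁰(t) = ħ² ∑_{i≠j} ln|s_i(t) − s_j(t)| − ħ ∑_{i=1}^m (V + tW)(s_i(t)). Then F⁰ is differentiable on I and dF⁰/dt (t) = −ħ ∑_{i=1}^m W(s_i(t)) for every t ∈ I. -/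
open Finset Polynomial

/-- Swapping the roles of the two indices in a double sum over distinct pairs. -/
lemma double_sum_erase_swap {m : ℕ} (g : Fin m → Fin m → ℝ) :
    ∑ i : Fin m, ∑ j ∈ univ.erase i, g i j
      = ∑ i : Fin m, ∑ j ∈ univ.erase i, g j i := by
  simp only [← Finset.filter_ne', Finset.sum_filter]
  rw [Finset.sum_comm]
  refine Finset.sum_congr rfl fun i _ => Finset.sum_congr rfl fun j _ => ?_
  simp [ne_comm]

/-- Along a differentiable family of Bethe roots of the deformed
potential `V + t W`, the planar free energy
`F⁰(t) = ħ² ∑_{i≠j} ln|s i (t) − s j (t)| − ħ ∑ i, (V + tW)(s i (t))`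
is differentiable with `dF⁰/dt = −ħ ∑ i, W(s i (t))`. -/
theorem planar_free_energy_variation (m : ℕ) (hbar : ℝ) (hhbar : hbar ≠ 0)
    (V W : Polynomial ℝ) (I : Set ℝ) (hI : I.OrdConnected) (hInontriv : I.Nontrivial)
    (s s' : ℝ → Fin m → ℝ)
    (hdiff : ∀ t ∈ I, ∀ i, HasDerivWithinAt (fun τ => s τ i) (s' t i) I t)
    (hdist : ∀ t ∈ I, ∀ i j, i ≠ j → s t i ≠ s t j)
    (hBethe : ∀ t ∈ I, ∀ i,
      V.derivative.eval (s t i) + t * W.derivative.eval (s t i)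
        = 2 * hbar * ∑ j ∈ univ.erase i, 1 / (s t i - s t j)) :
    ∀ t ∈ I,
      HasDerivWithinAt
        (fun τ => hbar ^ 2 * ∑ i, ∑ j ∈ univ.erase i, Real.log |s τ i - s τ j|
          - hbar * ∑ i, (V.eval (s τ i) + τ * W.eval (s τ i)))
        (-hbar * ∑ i, W.eval (s t i)) I t := by
  intro t ht
  -- derivative of each logarithmic term
  have hlog : ∀ i : Fin m, ∀ j ∈ univ.erase i,
      HasDerivWithinAt (fun τ => Real.log |s τ i - s τ j|)
        ((s t i - s t j)⁻¹ * (s' t i - s' t j)) I t := by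
    intro i j hj
    have hne : s t i - s t j ≠ 0 :=
      sub_ne_zero.mpr (hdist t ht i j (Ne.symm (Finset.mem_erase.mp hj).1))
    have h := (Real.hasDerivAt_log hne).comp_hasDerivWithinAt t
      ((hdiff t ht i).sub (hdiff t ht j))
    simpa [Real.log_abs, Function.comp_def, Pi.sub_apply] using h
  have hA : HasDerivWithinAt
      (fun τ => ∑ i, ∑ j ∈ univ.erase i, Real.log |s τ i - s τ j|)
      (∑ i, ∑ j ∈ univ.erase i, (s t i - s t j)⁻¹ * (s' t i - s' t j)) I t :=
    HasDerivWithinAt.fun_sum fun i _ => HasDerivWithinAt.fun_sum fun j hj => hlog i j hj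
  -- derivative of each potential term
  have hpoly : ∀ i : Fin m, HasDerivWithinAt
      (fun τ => V.eval (s τ i) + τ * W.eval (s τ i))
      (V.derivative.eval (s t i) * s' t i
        + (1 * W.eval (s t i) + t * (W.derivative.eval (s t i) * s' t i))) I t := by
    intro i
    have h1 := (V.hasDerivAt (s t i)).comp_hasDerivWithinAt t (hdiff t ht i)
    have h2 := (W.hasDerivAt (s t i)).comp_hasDerivWithinAt t (hdiff t ht i)
    exact h1.add ((hasDerivWithinAt_id t I).mul h2)
  have hB : HasDerivWithinAt
      (fun τ => ∑ i, (V.eval (s τ i) + τ * W.eval (s τ i)))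
      (∑ i, (V.derivative.eval (s t i) * s' t i
        + (1 * W.eval (s t i) + t * (W.derivative.eval (s t i) * s' t i)))) I t :=
    HasDerivWithinAt.fun_sum fun i _ => hpoly i
  have hmain := (hA.const_mul (hbar ^ 2)).sub (hB.const_mul hbar)
  convert hmain using 1
  · rfl
  · rfl
  · rfl
  -- now an algebraic identity between the two derivative values
  -- symmetrization of the double sum
  have hkey : ∑ i, ∑ j ∈ univ.erase i, (s t i - s t j)⁻¹ * (s' t i - s' t j)
      = ∑ i, s' t i * (2 * ∑ j ∈ univ.erase i, (s t i - s t j)⁻¹) := by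
    have hsplit : ∀ i j : Fin m, (s t i - s t j)⁻¹ * (s' t i - s' t j)
        = (s t i - s t j)⁻¹ * s' t i + (s t j - s t i)⁻¹ * s' t j := by
      intro i j
      have : (s t j - s t i)⁻¹ = -(s t i - s t j)⁻¹ := by
        rw [← neg_sub (s t i) (s t j), inv_neg]
      rw [this]; ring
    calc ∑ i, ∑ j ∈ univ.erase i, (s t i - s t j)⁻¹ * (s' t i - s' t j)
        = ∑ i, ∑ j ∈ univ.erase i,
            ((s t i - s t j)⁻¹ * s' t i + (s t j - s t i)⁻¹ * s' t j) := by
          exact Finset.sum_congr rfl fun i _ => Finset.sum_congr rfl fun j _ => hsplit i j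
      _ = (∑ i, ∑ j ∈ univ.erase i, (s t i - s t j)⁻¹ * s' t i)
            + ∑ i, ∑ j ∈ univ.erase i, (s t j - s t i)⁻¹ * s' t j := by
          rw [← Finset.sum_add_distrib]
          exact Finset.sum_congr rfl fun i _ => Finset.sum_add_distrib
      _ = (∑ i, ∑ j ∈ univ.erase i, (s t i - s t j)⁻¹ * s' t i)
            + ∑ i, ∑ j ∈ univ.erase i, (s t i - s t j)⁻¹ * s' t i := by
          rw [double_sum_erase_swap (fun i j => (s t j - s t i)⁻¹ * s' t j)]
      _ = ∑ i, s' t i * (2 * ∑ j ∈ univ.erase i, (s t i - s t j)⁻¹) := by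
          rw [← two_mul, Finset.mul_sum]
          refine Finset.sum_congr rfl fun i _ => ?_
          rw [Finset.mul_sum, Finset.mul_sum, Finset.mul_sum]
          refine Finset.sum_congr rfl fun j _ => ?_
          ring
  rw [hkey]
  -- use the Bethe equations
  have h2 : hbar ^ 2 * ∑ i, s' t i * (2 * ∑ j ∈ univ.erase i, (s t i - s t j)⁻¹)
      = hbar * ∑ i, s' t i
          * (V.derivative.eval (s t i) + t * W.derivative.eval (s t i)) := by
    rw [Finset.mul_sum, Finset.mul_sum]
    refine Finset.sum_congr rfl fun i _ => ?_
    have h := hBethe t ht i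
    simp only [one_div] at h
    rw [h]
    ring
  rw [h2, ← mul_sub, ← Finset.sum_sub_distrib]
  have h3 : ∀ i : Fin m,
      s' t i * (V.derivative.eval (s t i) + t * W.derivative.eval (s t i))
        - (V.derivative.eval (s t i) * s' t i
          + (1 * W.eval (s t i) + t * (W.derivative.eval (s t i) * s' t i)))
      = -W.eval (s t i) := by intro i; ring
  rw [Finset.sum_congr rfl fun i _ => h3 i]
  rw [Finset.sum_neg_distrib]
  ring
end

section
/- Let V ∈ ℝ[X], let I ⊆ (0,∞) be an interval, and let s : I → ℝ^m be a differentiable map whose coordinates are pairwise distinct for every ħ ∈ I and satisfy, for all ħ ∈ I and all i, the Bethe equations V′(s_i(ħ)) = 2ħ ∑_{j≠i} 1/(s_i(ħ) − s_j(ħ)). Define F⁰(ħ) = ħ² ∑_{i≠j} ln|s_i(ħ) − s_j(ħ)| − ħ ∑_{i=1}^m V(s_i(ħ)). Then F⁰ is differentiable on I and satisfies the dilaton equation ħ · dF⁰/dħ (ħ) = 2 F⁰(ħ) + ħ ∑_{i=1}^m V(s_i(ħ)) for every ħ ∈ I. -/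
open Finset Polynomial

/-- Along a differentiable family of Bethe roots parametrized by
`ħ ∈ I ⊆ (0,∞)`, the planar free energy
`F⁰(ħ) = ħ² ∑_{i≠j} ln|s i (ħ) − s j (ħ)| − ħ ∑ i, V(s i (ħ))`
is differentiable and satisfies the dilaton equation
`ħ · dF⁰/dħ = 2 F⁰(ħ) + ħ ∑ i, V(s i (ħ))`. -/
theorem planar_free_energy_dilaton (m : ℕ) (V : Polynomial ℝ)
    (I : Set ℝ) (hI : I.OrdConnected) (hInontriv : I.Nontrivial)
    (hIpos : ∀ h ∈ I, (0 : ℝ) < h)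
    (s s' : ℝ → Fin m → ℝ)
    (hdiff : ∀ h ∈ I, ∀ i, HasDerivWithinAt (fun τ => s τ i) (s' h i) I h)
    (hdist : ∀ h ∈ I, ∀ i j, i ≠ j → s h i ≠ s h j)
    (hBethe : ∀ h ∈ I, ∀ i,
      V.derivative.eval (s h i)
        = 2 * h * ∑ j ∈ univ.erase i, 1 / (s h i - s h j)) :
    ∀ h ∈ I, ∃ d : ℝ,
      HasDerivWithinAt
        (fun τ => τ ^ 2 * ∑ i, ∑ j ∈ univ.erase i, Real.log |s τ i - s τ j|
          - τ * ∑ i, V.eval (s τ i)) d I h ∧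
      h * d
        = 2 * (h ^ 2 * ∑ i, ∑ j ∈ univ.erase i, Real.log |s h i - s h j|
            - h * ∑ i, V.eval (s h i))
          + h * ∑ i, V.eval (s h i) := by
  intro h hh
  set Lval : ℝ := ∑ i, ∑ j ∈ univ.erase i, Real.log |s h i - s h j| with hLval
  set Sval : ℝ := ∑ i, V.eval (s h i) with hSval
  set L' : ℝ := ∑ i, ∑ j ∈ univ.erase i, (s' h i - s' h j) / (s h i - s h j) with hL'def
  set S' : ℝ := ∑ i, V.derivative.eval (s h i) * s' h i with hS'def
  -- derivative of the log part
  have hLderiv : HasDerivWithinAt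
      (fun τ => ∑ i, ∑ j ∈ univ.erase i, Real.log |s τ i - s τ j|) L' I h := by
    rw [hL'def]
    apply HasDerivWithinAt.fun_sum
    intro i _
    apply HasDerivWithinAt.fun_sum
    intro j hj
    have hne : s h i - s h j ≠ 0 :=
      sub_ne_zero.2 (hdist h hh i j (Finset.ne_of_mem_erase hj).symm)
    have : (fun τ => Real.log |s τ i - s τ j|)
        = fun τ => Real.log (s τ i - s τ j) := by
      funext τ; rw [Real.log_abs]
    rw [this]
    exact ((hdiff h hh i).sub (hdiff h hh j)).log hne
  -- derivative of the potential part
  have hSderiv : HasDerivWithinAt (fun τ => ∑ i, V.eval (s τ i)) S' I h := by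
    rw [hS'def]
    apply HasDerivWithinAt.fun_sum
    intro i _
    exact (V.hasDerivAt (s h i)).comp_hasDerivWithinAt h (hdiff h hh i)
  -- the full derivative
  refine ⟨(2 * h ^ 1 * Lval + h ^ 2 * L') - (1 * Sval + h * S'), ?_, ?_⟩
  · have h1 : HasDerivWithinAt (fun τ : ℝ => τ ^ 2) (2 * h ^ 1) I h := by
      simpa using (hasDerivAt_pow 2 h).hasDerivWithinAt
    have h2 : HasDerivWithinAt (fun τ : ℝ => τ) (1 : ℝ) I h :=
      (hasDerivAt_id h).hasDerivWithinAt
    exact (h1.mul hLderiv).sub (h2.mul hSderiv)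
  · -- key identity : h * L' = S'
    have hswap : ∀ f : Fin m → Fin m → ℝ,
        ∑ i, ∑ j ∈ univ.erase i, f i j = ∑ j, ∑ i ∈ univ.erase j, f i j := by
      intro f
      rw [Finset.sum_comm']
      intro x y
      simp [and_comm, ne_comm]
    have hkey : h * L' = S' := by
      have hsplit : L' = (∑ i, ∑ j ∈ univ.erase i, s' h i / (s h i - s h j))
          - ∑ i, ∑ j ∈ univ.erase i, s' h j / (s h i - s h j) := by
        rw [hL'def, ← Finset.sum_sub_distrib]
        refine Finset.sum_congr rfl fun i _ => ?_
        rw [← Finset.sum_sub_distrib]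
        exact Finset.sum_congr rfl fun j _ => sub_div _ _ _
      have hB : (∑ i, ∑ j ∈ univ.erase i, s' h j / (s h i - s h j))
          = - ∑ i, ∑ j ∈ univ.erase i, s' h i / (s h i - s h j) := by
        rw [hswap (fun i j => s' h j / (s h i - s h j)), ← Finset.sum_neg_distrib]
        refine Finset.sum_congr rfl fun j _ => ?_
        rw [← Finset.sum_neg_distrib]
        refine Finset.sum_congr rfl fun i _ => ?_
        rw [← div_neg, neg_sub]
      have hL2 : L' = 2 * ∑ i, s' h i * ∑ j ∈ univ.erase i, 1 / (s h i - s h j) := by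
        rw [hsplit, hB, sub_neg_eq_add, ← two_mul]
        congr 1
        refine Finset.sum_congr rfl fun i _ => ?_
        rw [Finset.mul_sum]
        exact Finset.sum_congr rfl fun j _ => by rw [mul_one_div]
      rw [hL2, hS'def, Finset.mul_sum, Finset.mul_sum]
      refine Finset.sum_congr rfl fun i _ => ?_
      rw [hBethe h hh i]
      ring
    linear_combination h ^ 2 * hkey
end

section
/- Let V, W ∈ ℂ[X], ħ a nonzero complex number, I ⊆ ℝ an interval, and s : I → ℂ^m a differentiable map whose coordinates are pairwise distinct for every t ∈ I and satisfy, for all t ∈ I and all i, the deformed Bethe equations V′(s_i(t)) + t·W′(s_i(t)) = 2ħ ∑_{j≠i} 1/(s_i(t) − s_j(t)). Assume moreover that for each t the Hessian matrix T(t) (with T_{ii}(t) = (1/ħ)(V″+tW″)(s_i(t)) + 2∑_{j≠i}1/(s_i(t)−s_j(t))² and T_{ij}(t) = −2/(s_i(t)−s_j(t))² for i ≠ j) is invertible with inverse A(t). Then for every t ∈ I and every x ∈ ℂ not equal to any s_i(t): d/dt [ ħ ∑_{i=1}^m 1/(x − s_i(t)) ] = − ∑_{i,j=1}^m A_{ij}(t)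 · W′(s_j(t)) / (x − s_i(t))². (This is the g = 0, n = 1 case of the variational formula δW_n^{(g)} = −∑Res W_{n+1}^{(g)} δV: the variation of the resolvent ω under a deformation of the potential is given by the quantum Bergmann kernel.) -/
open Finset Polynomial

/-- Along a differentiable family of deformed Bethe roots for
`V + t W` whose Hessian `T(t)` is invertible with inverse `A(t)`, the resolvent
`ω_t(x) = ħ ∑ i, 1/(x − s i (t))` satisfies
`d/dt ω_t(x) = − ∑ i j, A i j (t) · W′(s j (t)) / (x − s i (t))²`. -/
theorem resolvent_variation (m : ℕ) (hbar : ℂ) (hhbar : hbar ≠ 0)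
    (V W : Polynomial ℂ) (I : Set ℝ) (hI : I.OrdConnected) (hInontriv : I.Nontrivial)
    (s s' : ℝ → Fin m → ℂ) (A : ℝ → Matrix (Fin m) (Fin m) ℂ)
    (hdiff : ∀ t ∈ I, ∀ i, HasDerivWithinAt (fun τ => s τ i) (s' t i) I t)
    (hdist : ∀ t ∈ I, ∀ i j, i ≠ j → s t i ≠ s t j)
    (hBethe : ∀ t ∈ I, ∀ i,
      V.derivative.eval (s t i) + (t : ℂ) * W.derivative.eval (s t i)
        = 2 * hbar * ∑ j ∈ univ.erase i, 1 / (s t i - s t j))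
    (hA : ∀ t ∈ I,
      hessianT m hbar
          (fun k => V.derivative.derivative.eval (s t k)
            + (t : ℂ) * W.derivative.derivative.eval (s t k)) (s t) * A t = 1 ∧
      A t * hessianT m hbar
          (fun k => V.derivative.derivative.eval (s t k)
            + (t : ℂ) * W.derivative.derivative.eval (s t k)) (s t) = 1) :
    ∀ t ∈ I, ∀ x : ℂ, (∀ i, x ≠ s t i) →
      HasDerivWithinAt (fun τ => hbar * ∑ i, 1 / (x - s τ i))
        (-∑ i, ∑ j, A t i j * W.derivative.eval (s t j) / (x - s t i) ^ 2) I t := by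
  classical
  intro t ht x hx
  -- unique differentiability
  have hconv : Convex ℝ I := convex_iff_ordConnected.mpr hI
  obtain ⟨a, ha, b, hb, hab⟩ := hInontriv
  have hint : (interior I).Nonempty := by
    rcases hab.lt_or_gt with h | h
    · exact ⟨(a + b) / 2, interior_mono (Set.Ioo_subset_Icc_self.trans (hI.out ha hb))
        (by rw [interior_Ioo]; exact ⟨by linarith, by linarith⟩)⟩
    · exact ⟨(a + b) / 2, interior_mono (Set.Ioo_subset_Icc_self.trans (hI.out hb ha))
        (by rw [interior_Ioo]; exact ⟨by linarith, by linarith⟩)⟩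
  have hud : UniqueDiffWithinAt ℝ I t :=
    uniqueDiffWithinAt_convex hconv hint (subset_closure ht)
  -- abbreviations
  set w : Fin m → ℂ := fun j => W.derivative.eval (s t j) with hw
  set vpp : Fin m → ℂ := fun k => V.derivative.derivative.eval (s t k)
      + (t : ℂ) * W.derivative.derivative.eval (s t k) with hvpp
  set Tm : Matrix (Fin m) (Fin m) ℂ := hessianT m hbar vpp (s t) with hTm
  -- derivative of polynomial composition
  have hpoly : ∀ (p : Polynomial ℂ) (i : Fin m), HasDerivWithinAt
      (fun τ => p.eval (s τ i)) (s' t i * p.derivative.eval (s t i)) I t := by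
    intro p i
    exact (p.hasDerivAt (s t i)).scomp_hasDerivWithinAt t (hdiff t ht i)
  have hofReal : HasDerivWithinAt (fun τ : ℝ => (τ : ℂ)) 1 I t := by
    simpa using (hasDerivAt_id t).ofReal_comp.hasDerivWithinAt
  -- derivative of 1/(s τ i - s τ j)
  have hinv : ∀ i j : Fin m, i ≠ j → HasDerivWithinAt
      (fun τ => 1 / (s τ i - s τ j))
      (-(s' t i - s' t j) / (s t i - s t j) ^ 2) I t := by
    intro i j hij
    have h1 : HasDerivWithinAt (fun τ => s τ i - s τ j) (s' t i - s' t j) I t :=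
      (hdiff t ht i).sub (hdiff t ht j)
    have hne : s t i - s t j ≠ 0 := sub_ne_zero.mpr (hdist t ht i j hij)
    have h2 := (hasDerivAt_inv hne).scomp_hasDerivWithinAt t h1
    convert h2 using 1
    · rfl
    · ext τ; simp [one_div, Function.comp]
    · simp [smul_eq_mul]; ring
  -- differentiating the Bethe relation
  have hKey : ∀ i : Fin m, s' t i * vpp i + w i
      + 2 * hbar * ∑ j ∈ univ.erase i, (s' t i - s' t j) / (s t i - s t j) ^ 2 = 0 := by
    intro i
    have hFd : HasDerivWithinAt
        (fun τ => V.derivative.eval (s τ i) + (τ : ℂ) * W.derivative.eval (s τ i)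
          - 2 * hbar * ∑ j ∈ univ.erase i, 1 / (s τ i - s τ j))
        (s' t i * V.derivative.derivative.eval (s t i)
          + (1 * W.derivative.eval (s t i)
              + (t : ℂ) * (s' t i * W.derivative.derivative.eval (s t i)))
          - 2 * hbar * ∑ j ∈ univ.erase i, (-(s' t i - s' t j) / (s t i - s t j) ^ 2)) I t :=
      ((hpoly V.derivative i).add (hofReal.mul (hpoly W.derivative i))).sub
        ((HasDerivWithinAt.fun_sum fun j hj =>
          hinv i j fun h => (Finset.ne_of_mem_erase hj) h.symm).const_mul (2 * hbar))
    have hF0 : HasDerivWithinAt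
        (fun τ => V.derivative.eval (s τ i) + (τ : ℂ) * W.derivative.eval (s τ i)
          - 2 * hbar * ∑ j ∈ univ.erase i, 1 / (s τ i - s τ j)) (0 : ℂ) I t := by
      refine (hasDerivWithinAt_const t I (0 : ℂ)).congr (fun τ hτ => ?_) ?_
      · rw [hBethe τ hτ i]; ring
      · rw [hBethe t ht i]; ring
    have hD := hud.eq_deriv _ hFd hF0
    simp only [neg_div, Finset.sum_neg_distrib] at hD
    simp only [hvpp, hw]
    linear_combination hD
  -- T(t) ∙ s'(t) = -(1/ħ) W'(s(t))
  have hTv : Tm.mulVec (s' t) = fun i => -(1 / hbar) * w i := by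
    funext i
    have hKi := hKey i
    have hsum1 : ∑ j ∈ univ.erase i, (s' t i - s' t j) / (s t i - s t j) ^ 2
        = s' t i * (∑ j ∈ univ.erase i, 1 / (s t i - s t j) ^ 2)
          - ∑ j ∈ univ.erase i, s' t j / (s t i - s t j) ^ 2 := by
      rw [Finset.mul_sum, ← Finset.sum_sub_distrib]
      refine Finset.sum_congr rfl fun j _ => ?_
      ring
    have hsplit : Tm.mulVec (s' t) i
        = (1 / hbar * vpp i + 2 * ∑ k ∈ univ.erase i, 1 / (s t i - s t k) ^ 2) * s' t i
          + ∑ j ∈ univ.erase i, (-2 / (s t i - s t j) ^ 2) * s' t j := by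
      have hmv : Tm.mulVec (s' t) i = ∑ j, Tm i j * s' t j := rfl
      rw [hmv, ← Finset.add_sum_erase _ _ (Finset.mem_univ i)]
      congr 1
      · simp [hTm, hessianT]
      · refine Finset.sum_congr rfl fun j hj => ?_
        have hne : i ≠ j := fun h => (Finset.ne_of_mem_erase hj) h.symm
        simp [hTm, hessianT, hne]
    have hsum2 : ∑ j ∈ univ.erase i, (-2 / (s t i - s t j) ^ 2) * s' t j
        = -2 * ∑ j ∈ univ.erase i, s' t j / (s t i - s t j) ^ 2 := by
      rw [Finset.mul_sum]
      refine Finset.sum_congr rfl fun j _ => ?_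
      ring
    rw [hsplit, hsum2]
    rw [hsum1] at hKi
    have hh : 1 / hbar * hbar = 1 := one_div_mul_cancel hhbar
    linear_combination (1 / hbar) * hKi
      - (2 * (s' t i * (∑ k ∈ univ.erase i, 1 / (s t i - s t k) ^ 2)
          - ∑ j ∈ univ.erase i, s' t j / (s t i - s t j) ^ 2)) * hh
  -- solve for s'
  have hs' : ∀ i, s' t i = ∑ j, A t i j * (-(1 / hbar) * w j) := by
    intro i
    have h1 : (A t * Tm).mulVec (s' t) = s' t := by rw [(hA t ht).2, Matrix.one_mulVec]
    have h2 : s' t i = (A t).mulVec (fun k => -(1 / hbar) * w k) i := by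
      conv_lhs => rw [← h1, ← Matrix.mulVec_mulVec, hTv]
    rw [h2]
    rfl
  -- derivative of the resolvent
  have hres : HasDerivWithinAt (fun τ => hbar * ∑ i, 1 / (x - s τ i))
      (hbar * ∑ i, s' t i / (x - s t i) ^ 2) I t := by
    refine HasDerivWithinAt.const_mul hbar (HasDerivWithinAt.fun_sum fun i _ => ?_)
    have h1 : HasDerivWithinAt (fun τ => x - s τ i) (-(s' t i)) I t :=
      (hdiff t ht i).const_sub x
    have hne : x - s t i ≠ 0 := sub_ne_zero.mpr (hx i)
    have h2 := (hasDerivAt_inv hne).scomp_hasDerivWithinAt t h1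
    convert h2 using 1
    · ext τ; simp [one_div, Function.comp]
    · simp [smul_eq_mul]; ring
  convert hres using 1
  rw [Finset.mul_sum, ← Finset.sum_neg_distrib]
  refine Finset.sum_congr rfl fun i _ => ?_
  rw [hs' i, Finset.sum_div, Finset.mul_sum, ← Finset.sum_neg_distrib]
  refine Finset.sum_congr rfl fun j _ => ?_
  have hh : hbar * (1 / hbar) = 1 := mul_one_div_cancel hhbar
  linear_combination (A t i j * W.derivative.eval (s t j) / (x - s t i) ^ 2) * hh
end

section
/- Let V ∈ ℂ[X], let I ⊆ ℝ \ {0} be an interval, and let s : I → ℂ^m be a differentiable map whose coordinates are pairwise distinct for every ħ ∈ I and satisfy, for all ħ ∈ I and all i, the Bethe equations V′(s_i(ħ)) = 2ħ ∑_{j≠i} 1/(s_i(ħ) − s_j(ħ)). Assume moreover that for each ħ the Hessian matrix T(ħ) (with T_{ii}(ħ) = (1/ħ)V″(s_i(ħ)) + 2∑_{j≠i}1/(s_i(ħ)−s_j(ħ))² and T_{ij}(ħ) = −2/(s_i(ħ)−s_j(ħ))² for i ≠ j) is invertible with inverse A(ħ). Then for every ħ ∈ I and every x ∈ ℂ not equal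 to any s_i(ħ), setting ω_ħ(x) = ħ ∑_{i=1}^m 1/(x − s_i(ħ)): ħ · ∂/∂ħ [ ω_ħ(x) ] = ω_ħ(x) + ∑_{i,j=1}^m A_{ij}(ħ) · V′(s_j(ħ)) / (x − s_i(ħ))². -/
open Finset Polynomial

/-- Along a differentiable family of Bethe roots parametrized by
`ħ ∈ I ⊆ ℝ \ {0}` whose Hessian `T(ħ)` is invertible with inverse `A(ħ)`, the
resolvent `ω_ħ(x) = ħ ∑ i, 1/(x − s i (ħ))` satisfies
`ħ · ∂ω_ħ(x)/∂ħ = ω_ħ(x) + ∑ i j, A i j (ħ) · V′(s j (ħ)) / (x − s i (ħ))²`. -/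
theorem resolvent_hbar_variation (m : ℕ) (V : Polynomial ℂ)
    (I : Set ℝ) (hI : I.OrdConnected) (hInontriv : I.Nontrivial) (hI0 : (0 : ℝ) ∉ I)
    (s s' : ℝ → Fin m → ℂ) (A : ℝ → Matrix (Fin m) (Fin m) ℂ)
    (hdiff : ∀ h ∈ I, ∀ i, HasDerivWithinAt (fun τ => s τ i) (s' h i) I h)
    (hdist : ∀ h ∈ I, ∀ i j, i ≠ j → s h i ≠ s h j)
    (hBethe : ∀ h ∈ I, ∀ i,
      V.derivative.eval (s h i)
        = 2 * (h : ℂ) * ∑ j ∈ univ.erase i, 1 / (s h i - s h j))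
    (hA : ∀ h ∈ I,
      hessianT m (h : ℂ) (fun k => V.derivative.derivative.eval (s h k)) (s h)
          * A h = 1 ∧
      A h * hessianT m (h : ℂ)
          (fun k => V.derivative.derivative.eval (s h k)) (s h) = 1) :
    ∀ h ∈ I, ∀ x : ℂ, (∀ i, x ≠ s h i) →
      ∃ d : ℂ,
        HasDerivWithinAt (fun τ : ℝ => (τ : ℂ) * ∑ i, 1 / (x - s τ i)) d I h ∧
        (h : ℂ) * d
          = (h : ℂ) * ∑ i, 1 / (x - s h i)
            + ∑ i, ∑ j, A h i j * V.derivative.eval (s h j) / (x - s h i) ^ 2 := by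
  intro h hh x hx
  have hconv : Convex ℝ I := convex_iff_ordConnected.mpr hI
  -- uniqueness of derivatives within I
  obtain ⟨a, ha, b, hb, hab⟩ := hInontriv
  have hud : UniqueDiffWithinAt ℝ I h := by
    rcases hab.lt_or_gt with hlt | hlt
    · refine uniqueDiffWithinAt_convex hconv ⟨(a + b) / 2, ?_⟩ (subset_closure hh)
      exact interior_maximal (fun y hy => hI.out ha hb ⟨le_of_lt hy.1, le_of_lt hy.2⟩)
        isOpen_Ioo ⟨by linarith, by linarith⟩
    · refine uniqueDiffWithinAt_convex hconv ⟨(a + b) / 2, ?_⟩ (subset_closure hh)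
      exact interior_maximal (fun y hy => hI.out hb ha ⟨le_of_lt hy.1, le_of_lt hy.2⟩)
        isOpen_Ioo ⟨by linarith, by linarith⟩
  have hh0 : (h : ℂ) ≠ 0 := by
    exact_mod_cast Complex.ofReal_ne_zero.mpr (fun h0 => hI0 (h0 ▸ hh))
  -- derivative of each 1/(x - s τ i)
  have hFi : ∀ i : Fin m, HasDerivWithinAt (fun τ : ℝ => 1 / (x - s τ i))
      (s' h i / (x - s h i) ^ 2) I h := by
    intro i
    have hc : HasDerivWithinAt (fun τ : ℝ => x - s τ i) (-(s' h i)) I h := by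
      simpa using (hasDerivWithinAt_const h I x).fun_sub (hdiff h hh i)
    have h2 := (hasDerivAt_inv (sub_ne_zero.mpr (hx i))).comp_hasDerivWithinAt h hc
    convert h2 using 1
    · rfl
    · funext τ; simp [Function.comp, one_div]
    · field_simp
  have hF : HasDerivWithinAt (fun τ : ℝ => ∑ i, 1 / (x - s τ i))
      (∑ i, s' h i / (x - s h i) ^ 2) I h :=
    HasDerivWithinAt.fun_sum fun i _ => hFi i
  have hOfReal : HasDerivWithinAt (fun τ : ℝ => (τ : ℂ)) 1 I h := by
    simpa using (hasDerivWithinAt_id h I).ofReal_comp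
  have hR : HasDerivWithinAt (fun τ : ℝ => (τ : ℂ) * ∑ i, 1 / (x - s τ i))
      (∑ i, 1 / (x - s h i) + (h : ℂ) * ∑ i, s' h i / (x - s h i) ^ 2) I h := by
    simpa using hOfReal.fun_mul hF
  refine ⟨_, hR, ?_⟩
  -- the key identity: ħ² s'ᵢ = ∑ⱼ Aᵢⱼ V'(sⱼ)
  have key : ∀ i, (h : ℂ) ^ 2 * s' h i
      = ∑ j, A h i j * V.derivative.eval (s h j) := by
    -- first differentiate the Bethe equations
    have hTb : ∀ i, ∑ j, hessianT m (h : ℂ)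
        (fun k => V.derivative.derivative.eval (s h k)) (s h) i j
          * ((h : ℂ) ^ 2 * s' h j) = V.derivative.eval (s h i) := by
      intro i
      -- derivative of the difference of the two sides of the Bethe equation
      have hdij : ∀ j ∈ univ.erase i, s h i - s h j ≠ 0 := fun j hj =>
        sub_ne_zero.mpr (hdist h hh i j (Ne.symm (Finset.ne_of_mem_erase hj)))
      have hg1 : HasDerivWithinAt (fun τ : ℝ => V.derivative.eval (s τ i))
          (V.derivative.derivative.eval (s h i) * s' h i) I h :=
        (V.derivative.hasDerivAt (s h i)).comp_hasDerivWithinAt (h₂ := fun z => V.derivative.eval z) h (hdiff h hh i)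
      have hg2 : HasDerivWithinAt
          (fun τ : ℝ => 2 * (τ : ℂ) * ∑ j ∈ univ.erase i, 1 / (s τ i - s τ j))
          (2 * (∑ j ∈ univ.erase i, 1 / (s h i - s h j))
            + 2 * (h : ℂ) * ∑ j ∈ univ.erase i,
                -((s' h i - s' h j) / (s h i - s h j) ^ 2)) I h := by
        have hc : HasDerivWithinAt (fun τ : ℝ => 2 * (τ : ℂ)) 2 I h := by
          simpa using hOfReal.const_mul (2 : ℂ)
        have hterm : ∀ j ∈ univ.erase i,
            HasDerivWithinAt (fun τ : ℝ => 1 / (s τ i - s τ j))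
              (-((s' h i - s' h j) / (s h i - s h j) ^ 2)) I h := by
          intro j hj
          have hsub : HasDerivWithinAt (fun τ : ℝ => s τ i - s τ j)
              (s' h i - s' h j) I h := (hdiff h hh i).sub (hdiff h hh j)
          have h2 := (hasDerivAt_inv (hdij j hj)).comp_hasDerivWithinAt h hsub
          convert h2 using 1
          · rfl
          · funext τ; simp [Function.comp, one_div]
          · field_simp
        have hS : HasDerivWithinAt
            (fun τ : ℝ => ∑ j ∈ univ.erase i, 1 / (s τ i - s τ j))
            (∑ j ∈ univ.erase i, -((s' h i - s' h j) / (s h i - s h j) ^ 2)) I h :=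
          HasDerivWithinAt.fun_sum hterm
        simpa using hc.fun_mul hS
      -- the difference is 0 on I, hence its derivative within I is 0
      have hgD : HasDerivWithinAt
          (fun τ : ℝ => V.derivative.eval (s τ i)
            - 2 * (τ : ℂ) * ∑ j ∈ univ.erase i, 1 / (s τ i - s τ j))
          (V.derivative.derivative.eval (s h i) * s' h i
            - (2 * (∑ j ∈ univ.erase i, 1 / (s h i - s h j))
              + 2 * (h : ℂ) * ∑ j ∈ univ.erase i,
                  -((s' h i - s' h j) / (s h i - s h j) ^ 2))) I h := hg1.fun_sub hg2
      have hg0 : HasDerivWithinAt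
          (fun τ : ℝ => V.derivative.eval (s τ i)
            - 2 * (τ : ℂ) * ∑ j ∈ univ.erase i, 1 / (s τ i - s τ j))
          0 I h := by
        refine (hasDerivWithinAt_const h I (0 : ℂ)).congr ?_ ?_
        · intro y hy; rw [sub_eq_zero]; exact hBethe y hy i
        · rw [sub_eq_zero]; exact hBethe h hh i
      have hD0 := hud.eq_deriv _ hgD hg0
      -- notation
      set S1 := ∑ j ∈ univ.erase i, 1 / (s h i - s h j) with hS1
      set P := ∑ j ∈ univ.erase i, s' h i / (s h i - s h j) ^ 2 with hP
      set Q := ∑ j ∈ univ.erase i, s' h j / (s h i - s h j) ^ 2 with hQ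
      have hN : ∑ j ∈ univ.erase i, -((s' h i - s' h j) / (s h i - s h j) ^ 2)
          = Q - P := by
        rw [hP, hQ, ← Finset.sum_sub_distrib]
        exact Finset.sum_congr rfl fun j hj => by ring
      have hK1 : V.derivative.derivative.eval (s h i) * s' h i
          = 2 * S1 + 2 * (h : ℂ) * (Q - P) := by
        rw [← hN]; linear_combination hD0
      have hB := hBethe h hh i
      -- split the sum over j into the diagonal term and the rest
      rw [← Finset.add_sum_erase univ _ (Finset.mem_univ i)]
      have hdiag : hessianT m (h : ℂ)
          (fun k => V.derivative.derivative.eval (s h k)) (s h) i i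
          = (1 / (h : ℂ)) * V.derivative.derivative.eval (s h i)
            + 2 * ∑ k ∈ univ.erase i, 1 / (s h i - s h k) ^ 2 := by
        simp [hessianT]
      have hoff : ∑ j ∈ univ.erase i, hessianT m (h : ℂ)
          (fun k => V.derivative.derivative.eval (s h k)) (s h) i j
            * ((h : ℂ) ^ 2 * s' h j)
          = -2 * (h : ℂ) ^ 2 * Q := by
        rw [hQ, Finset.mul_sum]
        refine Finset.sum_congr rfl fun j hj => ?_
        have hij : i ≠ j := fun e => (Finset.ne_of_mem_erase hj) e.symm
        rw [hessianT]
        simp only [Matrix.of_apply, if_neg hij]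
        ring
      have hS2 : (∑ k ∈ univ.erase i, 1 / (s h i - s h k) ^ 2) * s' h i = P := by
        rw [hP, Finset.sum_mul]
        exact Finset.sum_congr rfl fun k hk => by ring
      rw [hdiag, hoff]
      have hexp : ((1 / (h : ℂ)) * V.derivative.derivative.eval (s h i)
            + 2 * ∑ k ∈ univ.erase i, 1 / (s h i - s h k) ^ 2)
            * ((h : ℂ) ^ 2 * s' h i)
          = (h : ℂ) * (V.derivative.derivative.eval (s h i) * s' h i)
            + 2 * (h : ℂ) ^ 2
              * ((∑ k ∈ univ.erase i, 1 / (s h i - s h k) ^ 2) * s' h i) := by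
        field_simp
      rw [hexp, hS2]
      linear_combination (h : ℂ) * hK1 - hB
    -- now invert using A
    intro i
    have hATb := (hA h hh).2
    set T := hessianT m (h : ℂ)
      (fun k => V.derivative.derivative.eval (s h k)) (s h) with hT
    have hvec : T.mulVec (fun j => (h : ℂ) ^ 2 * s' h j)
        = fun j => V.derivative.eval (s h j) := by
      funext i
      simpa [Matrix.mulVec, dotProduct] using hTb i
    calc (h : ℂ) ^ 2 * s' h i
        = ((1 : Matrix (Fin m) (Fin m) ℂ).mulVec
            (fun j => (h : ℂ) ^ 2 * s' h j)) i := by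
          rw [Matrix.one_mulVec]
      _ = ((A h * T).mulVec (fun j => (h : ℂ) ^ 2 * s' h j)) i := by rw [hATb]
      _ = ((A h).mulVec (T.mulVec (fun j => (h : ℂ) ^ 2 * s' h j))) i := by
          rw [Matrix.mulVec_mulVec]
      _ = ∑ j, A h i j * V.derivative.eval (s h j) := by
          rw [hvec]; simp [Matrix.mulVec, dotProduct]
  -- final algebra
  have hsum : ∑ i, ∑ j, A h i j * V.derivative.eval (s h j) / (x - s h i) ^ 2
      = (h : ℂ) ^ 2 * ∑ i, s' h i / (x - s h i) ^ 2 := by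
    rw [Finset.mul_sum]
    refine Finset.sum_congr rfl fun i _ => ?_
    rw [← Finset.sum_div, ← key i, mul_div_assoc]
  rw [hsum]
  ring
end
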